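/- arXiv:2307.12494 — 2 statements merged into one kernel-verified Lean document; each statement's English description precedes it below -/
import Mathlib

section
/- Fix constants 0 < c₁ ≤ c₂. There exist constants 0 < c ≤ C and a₀ ∈ (0,1) such that for every a ∈ (0, a₀) and every bounded measurable set Ω ⊂ ℝ² that satisfies the sandwich hypothesis with constants c₁, c₂ at scale a, the largest eigenvalue of the logarithmic potential operator satisfies c · a² · |log a| ≤ λ₀(Ω) ≤ C · a² · |log a|. -/
open MeasureTheory Real
open scoped ENNReal NNReal
open Set

noncomputable section

/-- Points of the plane. -/
abbrev Pt2 := EuclideanSpace ℝ (Fin 2)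

/-- The logarithmic kernel `-(1/(2π)) log |x - y|` in dimension 2. -/
def logKernel (x y : Pt2) : ℝ := -(1 / (2 * π)) * Real.log (dist x y)

/-- The logarithmic potential operator `N_Ω`. -/
def NOp (Ω : Set Pt2) (f : Pt2 → ℝ) (x : Pt2) : ℝ := ∫ y in Ω, logKernel x y * f y

/-- The quadratic form `⟨N_Ω u, u⟩` on `L²(Ω)`. -/
def quadForm (Ω : Set Pt2) (u : Lp ℝ 2 (volume.restrict Ω)) : ℝ :=
  ∫ x in Ω, NOp Ω u x * u x

/-- The `n`-th eigenvalue of the logarithmic potential operator, via the max–min principle: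
`λ_n(Ω) = sup` over `(n+1)`-dimensional subspaces `Ξ` of `L²(Ω)` of
`inf` over nonzero `u ∈ Ξ` of `⟨N_Ω u, u⟩ / ‖u‖²`. -/
def eigen2 (Ω : Set Pt2) (n : ℕ) : ℝ :=
  sSup {r : ℝ | ∃ Ξ : Submodule ℝ (Lp ℝ 2 (volume.restrict Ω)),
    Module.finrank ℝ ↥Ξ = n + 1 ∧
    r = sInf {q : ℝ | ∃ u ∈ Ξ, u ≠ 0 ∧ q = quadForm Ω u / ‖u‖ ^ 2}}

/-- The sandwich hypothesis: `Ω` is squeezed between two discs of radii comparable to `a`. -/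
def Sandwich (c₁ c₂ a : ℝ) (Ω : Set Pt2) : Prop :=
  ∃ (z₁ z₂ : Pt2) (ρ₁ ρ₂ : ℝ),
    c₁ * a ≤ ρ₁ ∧ ρ₁ ≤ c₂ * a ∧ c₁ * a ≤ ρ₂ ∧ ρ₂ ≤ c₂ * a ∧
    Metric.ball z₁ ρ₁ ⊆ Ω ∧ Ω ⊆ Metric.ball z₂ ρ₂

lemma logKernel_symm (x y : Pt2) : logKernel x y = logKernel y x := by
  simp [logKernel, dist_comm]

lemma measurable_logKernel : Measurable (fun p : Pt2 × Pt2 => logKernel p.1 p.2) := by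
  apply Measurable.const_mul
  exact Real.measurable_log.comp measurable_dist

lemma vol_ball (x : Pt2) {r : ℝ} (hr : 0 ≤ r) :
    volume (Metric.ball x r) = ENNReal.ofReal (r ^ 2) * volume (Metric.ball (0 : Pt2) 1) := by
  rw [Measure.addHaar_ball volume x hr]
  congr
  simp [finrank_euclideanSpace_fin]

lemma lintegral_log_ball (x : Pt2) {R : ℝ} (hR0 : 0 < R) (hR1 : R < 1) :
    ∫⁻ y in Metric.ball x R, ENNReal.ofReal (-Real.log (dist x y)) ≤
      ENNReal.ofReal (R ^ 2 * (-Real.log R + 1)) * volume (Metric.ball (0 : Pt2) 1) := by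
  set V₁ := volume (Metric.ball (0 : Pt2) 1)
  have f_mble : Measurable fun y : Pt2 => -Real.log (dist x y) :=
    (Real.measurable_log.comp (measurable_const.dist measurable_id)).neg
  have f_nn : 0 ≤ᵐ[volume.restrict (Metric.ball x R)] fun y => -Real.log (dist x y) := by
    filter_upwards [ae_restrict_mem measurableSet_ball] with y hy
    simp only [Pi.zero_apply]
    have : Real.log (dist x y) ≤ 0 := Real.log_nonpos dist_nonneg (by rw [Metric.mem_ball] at hy; rw [dist_comm]; linarith)
    linarith
  rw [lintegral_eq_lintegral_meas_lt _ f_nn f_mble.aemeasurable]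
  set T := -Real.log R with hTdef
  have hT : 0 < T := by
    have := Real.log_neg hR0 hR1; simp only [hTdef]; linarith
  have key : ∀ t ∈ Ioi (0:ℝ),
      (volume.restrict (Metric.ball x R)) {y | t < -Real.log (dist x y)} ≤
        ENNReal.ofReal (min R (Real.exp (-t)) ^ 2) * V₁ := by
    intro t ht
    rw [Measure.restrict_apply' measurableSet_ball]
    have hsub : {y : Pt2 | t < -Real.log (dist x y)} ∩ Metric.ball x R ⊆
        Metric.ball x (min R (Real.exp (-t))) := by
      rintro y ⟨hy1, hy2⟩
      simp only [Set.mem_setOf_eq] at hy1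
      have ht' : (0:ℝ) < t := ht
      have hd0 : 0 < dist x y := by
        rcases eq_or_lt_of_le (dist_nonneg (x := x) (y := y)) with h | h
        · exfalso; rw [← h] at hy1; simp at hy1; linarith
        · exact h
      have hlog : Real.log (dist x y) < -t := by linarith
      have hde : dist x y < Real.exp (-t) := (Real.log_lt_iff_lt_exp hd0).mp hlog
      rw [Metric.mem_ball, dist_comm]
      exact lt_min (by simpa [dist_comm] using hy2) hde
    calc volume ({y : Pt2 | t < -Real.log (dist x y)} ∩ Metric.ball x R)
        ≤ volume (Metric.ball x (min R (Real.exp (-t)))) := measure_mono hsub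
      _ = ENNReal.ofReal (min R (Real.exp (-t)) ^ 2) * V₁ :=
          vol_ball x (le_min hR0.le (Real.exp_pos _).le)
  calc ∫⁻ t in Ioi (0:ℝ), (volume.restrict (Metric.ball x R)) {y | t < -Real.log (dist x y)}
      ≤ ∫⁻ t in Ioi (0:ℝ), ENNReal.ofReal (min R (Real.exp (-t)) ^ 2) * V₁ := by
        refine lintegral_mono_ae ?_
        filter_upwards [ae_restrict_mem measurableSet_Ioi] with t ht
        exact key t ht
    _ = (∫⁻ t in Ioi (0:ℝ), ENNReal.ofReal (min R (Real.exp (-t)) ^ 2)) * V₁ := by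
        refine lintegral_mul_const _ ?_
        refine (Continuous.measurable ?_).ennreal_ofReal
        fun_prop
    _ ≤ (ENNReal.ofReal (R ^ 2 * T) + ENNReal.ofReal (R ^ 2)) * V₁ := by
        gcongr ?_ * V₁
        rw [← Set.Ioc_union_Ioi_eq_Ioi hT.le,
          lintegral_union measurableSet_Ioi (Set.Ioc_disjoint_Ioi le_rfl)]
        gcongr
        · calc ∫⁻ t in Ioc (0:ℝ) T, ENNReal.ofReal (min R (Real.exp (-t)) ^ 2)
              ≤ ∫⁻ _ in Ioc (0:ℝ) T, ENNReal.ofReal (R ^ 2) := by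
                refine lintegral_mono fun t => ?_
                exact ENNReal.ofReal_le_ofReal (by
                  have h1 : min R (Real.exp (-t)) ≤ R := min_le_left _ _
                  have h2 : 0 ≤ min R (Real.exp (-t)) := le_min hR0.le (Real.exp_pos _).le
                  nlinarith)
            _ = ENNReal.ofReal (R ^ 2) * volume (Ioc (0:ℝ) T) := setLIntegral_const _ _
            _ = ENNReal.ofReal (R ^ 2) * ENNReal.ofReal T := by rw [Real.volume_Ioc, sub_zero]
            _ = ENNReal.ofReal (R ^ 2 * T) := (ENNReal.ofReal_mul (by positivity)).symm
        · calc ∫⁻ t in Ioi T, ENNReal.ofReal (min R (Real.exp (-t)) ^ 2)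
              ≤ ∫⁻ t in Ioi T, ENNReal.ofReal R * ENNReal.ofReal (Real.exp (-t)) := by
                refine lintegral_mono_ae ?_
                filter_upwards [ae_restrict_mem measurableSet_Ioi] with t ht
                rw [← ENNReal.ofReal_mul hR0.le]
                refine ENNReal.ofReal_le_ofReal ?_
                have h2 : 0 ≤ min R (Real.exp (-t)) := le_min hR0.le (Real.exp_pos _).le
                have h3 : min R (Real.exp (-t)) ≤ Real.exp (-t) := min_le_right _ _
                have h4 : Real.exp (-t) ≤ R := by
                  rw [← Real.exp_log hR0]
                  exact Real.exp_le_exp.mpr (by simp only [hTdef] at ht ⊢; linarith [(Set.mem_Ioi.mp ht).le])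
                calc min R (Real.exp (-t)) ^ 2 ≤ Real.exp (-t) ^ 2 := by nlinarith
                  _ = Real.exp (-t) * Real.exp (-t) := sq _
                  _ ≤ R * Real.exp (-t) := by nlinarith [Real.exp_pos (-t)]
            _ = ENNReal.ofReal R * ∫⁻ t in Ioi T, ENNReal.ofReal (Real.exp (-t)) := by
                refine lintegral_const_mul _ ?_
                exact (Real.continuous_exp.comp continuous_neg).measurable.ennreal_ofReal
            _ = ENNReal.ofReal R * ENNReal.ofReal (Real.exp (-T)) := by
                congr 1
                rw [← ofReal_integral_eq_lintegral_ofReal]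
                · rw [integral_exp_neg_Ioi]
                · exact (by simpa using exp_neg_integrableOn_Ioi T (by norm_num : (0:ℝ) < 1) :
                      IntegrableOn (fun x => rexp (-x)) (Ioi T) volume)
                · exact ae_of_all _ fun t => (Real.exp_pos _).le
            _ = ENNReal.ofReal (R ^ 2) := by
                have : Real.exp (-T) = R := by
                  simp only [hTdef, neg_neg]; exact Real.exp_log hR0
                rw [this, ← ENNReal.ofReal_mul hR0.le, sq]
    _ = ENNReal.ofReal (R ^ 2 * (-Real.log R + 1)) * V₁ := by
        congr 1
        rw [← ENNReal.ofReal_add (by positivity) (by positivity)]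
        congr 1
        simp only [hTdef]; ring

lemma norm_logKernel {x y : Pt2} (h : dist x y < 1) :
    ‖logKernel x y‖ = (1 / (2 * π)) * (-Real.log (dist x y)) := by
  have hπ : 0 < π := Real.pi_pos
  have hlog : Real.log (dist x y) ≤ 0 := Real.log_nonpos dist_nonneg h.le
  rw [logKernel, norm_mul, Real.norm_eq_abs, Real.norm_eq_abs, abs_neg,
    abs_of_nonneg (by positivity : (0:ℝ) ≤ 1 / (2*π)), abs_of_nonpos hlog]

lemma kernel_lint_bound {Ω : Set Pt2} {x : Pt2} {R : ℝ} (hR0 : 0 < R) (hR1 : R < 1)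
    (hΩ : Ω ⊆ Metric.ball x R) :
    ∫⁻ y in Ω, (‖logKernel x y‖₊ : ℝ≥0∞) ∂volume ≤
      ENNReal.ofReal (1 / (2 * π) * (R ^ 2 * (-Real.log R + 1)) *
        (volume (Metric.ball (0 : Pt2) 1)).toReal) := by
  have hπ : 0 < π := Real.pi_pos
  have hVne : volume (Metric.ball (0 : Pt2) 1) ≠ ⊤ := measure_ball_lt_top.ne
  calc ∫⁻ y in Ω, (‖logKernel x y‖₊ : ℝ≥0∞) ∂volume
      ≤ ∫⁻ y in Metric.ball x R, (‖logKernel x y‖₊ : ℝ≥0∞) ∂volume :=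
        lintegral_mono' (Measure.restrict_mono hΩ le_rfl) le_rfl
    _ = ∫⁻ y in Metric.ball x R,
          ENNReal.ofReal (1 / (2 * π)) * ENNReal.ofReal (-Real.log (dist x y)) ∂volume := by
        refine lintegral_congr_ae ?_
        filter_upwards [ae_restrict_mem measurableSet_ball] with y hy
        rw [Metric.mem_ball, dist_comm] at hy
        rw [← enorm_eq_nnnorm, ← ofReal_norm, norm_logKernel (lt_trans hy hR1),
          ENNReal.ofReal_mul (by positivity)]
    _ = ENNReal.ofReal (1 / (2 * π)) *
          ∫⁻ y in Metric.ball x R, ENNReal.ofReal (-Real.log (dist x y)) ∂volume := by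
        refine lintegral_const_mul _ ?_
        exact ((Real.measurable_log.comp (measurable_const.dist measurable_id)).neg).ennreal_ofReal
    _ ≤ ENNReal.ofReal (1 / (2 * π)) *
          (ENNReal.ofReal (R ^ 2 * (-Real.log R + 1)) * volume (Metric.ball (0 : Pt2) 1)) := by
        gcongr
        exact lintegral_log_ball x hR0 hR1
    _ = ENNReal.ofReal (1 / (2 * π) * (R ^ 2 * (-Real.log R + 1)) *
          (volume (Metric.ball (0 : Pt2) 1)).toReal) := by
        have hlR : (0:ℝ) ≤ -Real.log R := by
          have := Real.log_nonpos hR0.le hR1.le; linarith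
        rw [← ENNReal.ofReal_toReal hVne, ← ENNReal.ofReal_mul (by positivity),
          ← ENNReal.ofReal_mul (by positivity)]
        congr 1
        rw [ENNReal.toReal_ofReal ENNReal.toReal_nonneg]
        ring

lemma lintegral_nnnorm_sq (Ω : Set Pt2) (u : Lp ℝ 2 (volume.restrict Ω)) :
    ∫⁻ x, (‖u x‖₊ : ℝ≥0∞) ^ 2 ∂(volume.restrict Ω) = ENNReal.ofReal (‖u‖ ^ 2) := by
  have h1 : eLpNorm (⇑u) 2 (volume.restrict Ω)
      = (∫⁻ x, (‖u x‖₊ : ℝ≥0∞) ^ (2:ℝ) ∂(volume.restrict Ω)) ^ (1/(2:ℝ)) := by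
    rw [eLpNorm_eq_lintegral_rpow_enorm_toReal (by norm_num) (by norm_num)]
    norm_num
    rfl
  have h2 : ∫⁻ x, (‖u x‖₊ : ℝ≥0∞) ^ (2:ℝ) ∂(volume.restrict Ω)
      = (eLpNorm (⇑u) 2 (volume.restrict Ω)) ^ (2:ℝ) := by
    rw [h1, ← ENNReal.rpow_mul]
    norm_num
  have h3 : ∫⁻ x, (‖u x‖₊ : ℝ≥0∞) ^ 2 ∂(volume.restrict Ω)
      = ∫⁻ x, (‖u x‖₊ : ℝ≥0∞) ^ (2:ℝ) ∂(volume.restrict Ω) := by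
    refine lintegral_congr fun x => ?_
    rw [← ENNReal.rpow_natCast]
    norm_num
  have h4 : (eLpNorm (⇑u) 2 (volume.restrict Ω)) ^ (2:ℝ)
      = (eLpNorm (⇑u) 2 (volume.restrict Ω)) ^ (2:ℕ) := by
    rw [← ENNReal.rpow_natCast]; norm_num
  rw [h3, h2, h4, Lp.norm_def, ← ENNReal.toReal_pow,
    ENNReal.ofReal_toReal (ENNReal.pow_ne_top (Lp.eLpNorm_ne_top u))]

lemma quadForm_abs_le {Ω : Set Pt2} (hΩ : MeasurableSet Ω) {M : ℝ} (hM : 0 ≤ M)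
    (hker : ∀ x ∈ Ω, ∫⁻ y in Ω, (‖logKernel x y‖₊ : ℝ≥0∞) ∂volume ≤ ENNReal.ofReal M)
    (u : Lp ℝ 2 (volume.restrict Ω)) :
    |quadForm Ω u| ≤ 2 * M * ‖u‖ ^ 2 := by
  set U : Pt2 → ℝ≥0∞ := fun x => (‖u x‖₊ : ℝ≥0∞) with hU
  have hKx : ∀ x : Pt2, Measurable fun y => (‖logKernel x y‖₊ : ℝ≥0∞) :=
    fun x => (measurable_logKernel.comp measurable_prodMk_left).enorm
  have hKy : ∀ y : Pt2, Measurable fun x => (‖logKernel x y‖₊ : ℝ≥0∞) :=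
    fun y => (measurable_logKernel.comp measurable_prodMk_right).enorm
  have hUm : AEMeasurable U (volume.restrict Ω) := (Lp.aestronglyMeasurable u).enorm
  have hU2 : ∫⁻ x, U x ^ 2 ∂(volume.restrict Ω) = ENNReal.ofReal (‖u‖ ^ 2) := lintegral_nnnorm_sq Ω u
  have amgm : ∀ a b : ℝ≥0∞, a * b ≤ a ^ 2 + b ^ 2 := by
    intro a b
    rcases le_total a b with h | h
    · calc a * b ≤ b * b := mul_le_mul' h le_rfl
        _ = b ^ 2 := (sq b).symm
        _ ≤ a ^ 2 + b ^ 2 := le_add_self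
    · calc a * b ≤ a * a := mul_le_mul' le_rfl h
        _ = a ^ 2 := (sq a).symm
        _ ≤ a ^ 2 + b ^ 2 := le_self_add
  have κ_le : ∀ᵐ x ∂(volume.restrict Ω), (∫⁻ y, (‖logKernel x y‖₊ : ℝ≥0∞) ∂(volume.restrict Ω)) ≤ ENNReal.ofReal M := by
    filter_upwards [ae_restrict_mem hΩ] with x hx
    exact hker x hx
  have key : (∫⁻ x, (∫⁻ y, (‖logKernel x y‖₊ : ℝ≥0∞) * U y ∂(volume.restrict Ω)) * U x ∂(volume.restrict Ω))
      ≤ ENNReal.ofReal (2 * M * ‖u‖ ^ 2) := by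
    have step1 : (∫⁻ x, (∫⁻ y, (‖logKernel x y‖₊ : ℝ≥0∞) * U y ∂(volume.restrict Ω)) * U x ∂(volume.restrict Ω))
        ≤ ∫⁻ x, (U x ^ 2 * ∫⁻ y, (‖logKernel x y‖₊ : ℝ≥0∞) ∂(volume.restrict Ω))
            + ∫⁻ y, (‖logKernel x y‖₊ : ℝ≥0∞) * U y ^ 2 ∂(volume.restrict Ω) ∂(volume.restrict Ω) := by
      refine lintegral_mono fun x => ?_
      have : (∫⁻ y, (‖logKernel x y‖₊ : ℝ≥0∞) * U y ∂(volume.restrict Ω)) * U x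
          ≤ ∫⁻ y, (‖logKernel x y‖₊ : ℝ≥0∞) * (U x ^ 2 + U y ^ 2) ∂(volume.restrict Ω) := by
        rw [← lintegral_mul_const' (U x) _ ENNReal.coe_ne_top]
        refine lintegral_mono fun y => ?_
        rw [mul_assoc]
        refine mul_le_mul' le_rfl ?_
        calc U y * U x ≤ U y ^ 2 + U x ^ 2 := amgm _ _
          _ = U x ^ 2 + U y ^ 2 := add_comm _ _
      refine le_trans this (le_of_eq ?_)
      simp_rw [mul_add]
      rw [lintegral_add_left (((hKx x).mul_const _))]
      congr 1
      rw [lintegral_mul_const' (U x ^ 2) _ (ENNReal.pow_ne_top ENNReal.coe_ne_top), mul_comm]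
    have term1 : (∫⁻ x, U x ^ 2 * ∫⁻ y, (‖logKernel x y‖₊ : ℝ≥0∞) ∂(volume.restrict Ω) ∂(volume.restrict Ω))
        ≤ ENNReal.ofReal M * ENNReal.ofReal (‖u‖ ^ 2) := by
      calc (∫⁻ x, U x ^ 2 * ∫⁻ y, (‖logKernel x y‖₊ : ℝ≥0∞) ∂(volume.restrict Ω) ∂(volume.restrict Ω))
          ≤ ∫⁻ x, U x ^ 2 * ENNReal.ofReal M ∂(volume.restrict Ω) := by
            refine lintegral_mono_ae ?_
            filter_upwards [κ_le] with x hx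
            exact mul_le_mul' le_rfl hx
        _ = ENNReal.ofReal M * ∫⁻ x, U x ^ 2 ∂(volume.restrict Ω) := by
            rw [lintegral_mul_const' _ _ ENNReal.ofReal_ne_top, mul_comm]
        _ = ENNReal.ofReal M * ENNReal.ofReal (‖u‖ ^ 2) := by rw [hU2]
    have term2 : (∫⁻ x, ∫⁻ y, (‖logKernel x y‖₊ : ℝ≥0∞) * U y ^ 2 ∂(volume.restrict Ω) ∂(volume.restrict Ω))
        ≤ ENNReal.ofReal M * ENNReal.ofReal (‖u‖ ^ 2) := by
      have hswap : (∫⁻ x, ∫⁻ y, (‖logKernel x y‖₊ : ℝ≥0∞) * U y ^ 2 ∂(volume.restrict Ω) ∂(volume.restrict Ω))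
          = ∫⁻ y, ∫⁻ x, (‖logKernel x y‖₊ : ℝ≥0∞) * U y ^ 2 ∂(volume.restrict Ω) ∂(volume.restrict Ω) := by
        refine lintegral_lintegral_swap ?_
        exact (measurable_logKernel.enorm.aemeasurable).mul
          (hUm.comp_snd.pow_const 2)
      rw [hswap]
      calc (∫⁻ y, ∫⁻ x, (‖logKernel x y‖₊ : ℝ≥0∞) * U y ^ 2 ∂(volume.restrict Ω) ∂(volume.restrict Ω))
          = ∫⁻ y, U y ^ 2 * ∫⁻ x, (‖logKernel y x‖₊ : ℝ≥0∞) ∂(volume.restrict Ω) ∂(volume.restrict Ω) := by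
            refine lintegral_congr fun y => ?_
            rw [lintegral_mul_const' (U y ^ 2) _ (ENNReal.pow_ne_top ENNReal.coe_ne_top), mul_comm]
            congr 1
            refine lintegral_congr fun x => ?_
            rw [logKernel_symm]
        _ ≤ ∫⁻ y, U y ^ 2 * ENNReal.ofReal M ∂(volume.restrict Ω) := by
            refine lintegral_mono_ae ?_
            filter_upwards [κ_le] with y hy
            exact mul_le_mul' le_rfl hy
        _ = ENNReal.ofReal M * ENNReal.ofReal (‖u‖ ^ 2) := by
            rw [lintegral_mul_const' _ _ ENNReal.ofReal_ne_top, mul_comm, hU2]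
    calc (∫⁻ x, (∫⁻ y, (‖logKernel x y‖₊ : ℝ≥0∞) * U y ∂(volume.restrict Ω)) * U x ∂(volume.restrict Ω))
        ≤ ∫⁻ x, (U x ^ 2 * ∫⁻ y, (‖logKernel x y‖₊ : ℝ≥0∞) ∂(volume.restrict Ω))
            + ∫⁻ y, (‖logKernel x y‖₊ : ℝ≥0∞) * U y ^ 2 ∂(volume.restrict Ω) ∂(volume.restrict Ω) := step1
      _ = (∫⁻ x, U x ^ 2 * ∫⁻ y, (‖logKernel x y‖₊ : ℝ≥0∞) ∂(volume.restrict Ω) ∂(volume.restrict Ω))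
          + ∫⁻ x, ∫⁻ y, (‖logKernel x y‖₊ : ℝ≥0∞) * U y ^ 2 ∂(volume.restrict Ω) ∂(volume.restrict Ω) := by
          refine lintegral_add_left' ?_ _
          exact (hUm.pow_const 2).mul
            (Measurable.lintegral_prod_right
              (f := fun x y => (‖logKernel x y‖₊ : ℝ≥0∞)) measurable_logKernel.enorm).aemeasurable
      _ ≤ ENNReal.ofReal M * ENNReal.ofReal (‖u‖ ^ 2)
          + ENNReal.ofReal M * ENNReal.ofReal (‖u‖ ^ 2) := add_le_add term1 term2
      _ = ENNReal.ofReal (2 * M * ‖u‖ ^ 2) := by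
          rw [← ENNReal.ofReal_mul hM, ← two_mul, mul_assoc,
            ENNReal.ofReal_mul (by norm_num : (0:ℝ) ≤ 2)]
          norm_num
  have hnorm : ∀ x, (‖NOp Ω (⇑u) x * u x‖₊ : ℝ≥0∞)
      ≤ (∫⁻ y, (‖logKernel x y‖₊ : ℝ≥0∞) * U y ∂(volume.restrict Ω)) * U x := by
    intro x
    rw [nnnorm_mul, ENNReal.coe_mul]
    refine mul_le_mul' ?_ le_rfl
    calc (‖NOp Ω (⇑u) x‖₊ : ℝ≥0∞) ≤ ∫⁻ y, (‖logKernel x y * u y‖₊ : ℝ≥0∞) ∂(volume.restrict Ω) :=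
        enorm_integral_le_lintegral_enorm _
      _ = ∫⁻ y, (‖logKernel x y‖₊ : ℝ≥0∞) * U y ∂(volume.restrict Ω) := by
        refine lintegral_congr fun y => ?_
        rw [nnnorm_mul, ENNReal.coe_mul]
  calc |quadForm Ω u| = ‖∫ x, NOp Ω (⇑u) x * u x ∂(volume.restrict Ω)‖ := by rw [Real.norm_eq_abs]; rfl
    _ ≤ (∫⁻ x, ENNReal.ofReal ‖NOp Ω (⇑u) x * u x‖ ∂(volume.restrict Ω)).toReal :=
        norm_integral_le_lintegral_norm _
    _ ≤ (ENNReal.ofReal (2 * M * ‖u‖ ^ 2)).toReal := by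
        refine ENNReal.toReal_mono ENNReal.ofReal_ne_top ?_
        refine le_trans (lintegral_mono fun x => ?_) key
        rw [ofReal_norm, enorm_eq_nnnorm]
        exact hnorm x
    _ = 2 * M * ‖u‖ ^ 2 := ENNReal.toReal_ofReal (by positivity)

lemma NOp_smul (Ω : Set Pt2) (t : ℝ) (u : Lp ℝ 2 (volume.restrict Ω)) (x : Pt2) :
    NOp Ω (⇑(t • u)) x = t * NOp Ω (⇑u) x := by
  have hcoe : ⇑(t • u) =ᵐ[volume.restrict Ω] fun y => t * u y := by
    filter_upwards [Lp.coeFn_smul t u] with y hy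
    rw [hy]; rfl
  unfold NOp
  rw [integral_congr_ae (by filter_upwards [hcoe] with y hy; rw [hy]; ring :
    (fun y => logKernel x y * (t • u) y) =ᵐ[volume.restrict Ω]
      fun y => t * (logKernel x y * u y))]
  exact integral_const_mul t _

lemma quadForm_smul (Ω : Set Pt2) (t : ℝ) (u : Lp ℝ 2 (volume.restrict Ω)) :
    quadForm Ω (t • u) = t ^ 2 * quadForm Ω u := by
  have hcoe : ⇑(t • u) =ᵐ[volume.restrict Ω] fun y => t * u y := by
    filter_upwards [Lp.coeFn_smul t u] with y hy
    rw [hy]; rfl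
  unfold quadForm
  rw [integral_congr_ae (by
    filter_upwards [hcoe] with x hx
    rw [hx, NOp_smul]
    ring :
    (fun x => NOp Ω (⇑(t • u)) x * (t • u) x) =ᵐ[volume.restrict Ω]
      fun x => t ^ 2 * (NOp Ω (⇑u) x * u x))]
  exact integral_const_mul _ _

lemma rayleigh_span_eq (Ω : Set Pt2) (u : Lp ℝ 2 (volume.restrict Ω)) (hu : u ≠ 0) :
    {q : ℝ | ∃ v ∈ Submodule.span ℝ {u}, v ≠ 0 ∧ q = quadForm Ω v / ‖v‖ ^ 2}
      = {quadForm Ω u / ‖u‖ ^ 2} := by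
  ext q
  simp only [Set.mem_setOf_eq, Set.mem_singleton_iff]
  constructor
  · rintro ⟨v, hv, hv0, rfl⟩
    obtain ⟨t, rfl⟩ := Submodule.mem_span_singleton.mp hv
    have ht : t ≠ 0 := by
      rintro rfl; simp at hv0
    rw [quadForm_smul, norm_smul, mul_pow, Real.norm_eq_abs, sq_abs]
    rw [mul_div_mul_left _ _ (pow_ne_zero 2 ht)]
  · rintro rfl
    exact ⟨u, Submodule.mem_span_singleton_self u, hu, rfl⟩

lemma quadForm_indicator_ge {Ω B : Set Pt2} (hB : MeasurableSet B)
    (hBΩ : B ⊆ Ω) (hfin : volume B ≠ ⊤) (hfin' : volume.restrict Ω B ≠ ⊤) {β mB : ℝ}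
    (hint : ∀ x ∈ B, IntegrableOn (fun y => logKernel x y) B volume)
    (hlow : ∀ x ∈ B, ∀ y ∈ B, x ≠ y → β ≤ logKernel x y)
    (hbdd : ∀ x ∈ B, ‖∫ y in B, logKernel x y‖ ≤ mB) :
    β * (volume B).toReal * (volume B).toReal
      ≤ quadForm Ω (indicatorConstLp 2 hB hfin' (1:ℝ)) := by
  set u := indicatorConstLp (μ := volume.restrict Ω) 2 hB hfin' (1:ℝ) with hu
  have hcoe : ⇑u =ᵐ[volume.restrict Ω] B.indicator fun _ => (1:ℝ) := indicatorConstLp_coeFn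
  have hBcap : B ∩ Ω = B := Set.inter_eq_self_of_subset_left hBΩ
  have hrr : (volume.restrict Ω).restrict B = volume.restrict B := by
    rw [Measure.restrict_restrict hB, hBcap]
  have hNOp : ∀ x, NOp Ω (⇑u) x = ∫ y in B, logKernel x y := by
    intro x
    unfold NOp
    have e1 : (fun y => logKernel x y * u y) =ᵐ[volume.restrict Ω]
        fun y => B.indicator (fun y => logKernel x y) y := by
      filter_upwards [hcoe] with y hy
      rw [hy]
      by_cases hyB : y ∈ B
      · simp [Set.indicator_of_mem hyB]
      · simp [Set.indicator_of_notMem hyB]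
    rw [integral_congr_ae e1, integral_indicator hB, hrr]
  have hquad : quadForm Ω u = ∫ x in B, ∫ y in B, logKernel x y := by
    unfold quadForm
    have e2 : (fun x => NOp Ω (⇑u) x * u x) =ᵐ[volume.restrict Ω]
        fun x => B.indicator (fun x => ∫ y in B, logKernel x y) x := by
      filter_upwards [hcoe] with x hx
      rw [hx, hNOp]
      by_cases hxB : x ∈ B
      · simp [Set.indicator_of_mem hxB]
      · simp [Set.indicator_of_notMem hxB]
    rw [integral_congr_ae e2, integral_indicator hB, hrr]
  rw [hquad]
  have hg_ge : ∀ x ∈ B, β * (volume B).toReal ≤ ∫ y in B, logKernel x y := by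
    intro x hx
    have hne : ∀ᵐ y ∂volume.restrict B, y ≠ x := by
      refine ae_iff.mpr ?_
      have hset : {y : Pt2 | ¬ y ≠ x} = {x} := by ext; simp
      rw [hset, Measure.restrict_apply' hB]
      exact le_antisymm (le_trans (measure_mono Set.inter_subset_left) (by simp)) (zero_le)
    have h1 : ∀ᵐ y ∂volume.restrict B, β ≤ logKernel x y := by
      filter_upwards [hne, ae_restrict_mem hB] with y hy1 hy2
      exact hlow x hx y hy2 (Ne.symm hy1)
    calc β * (volume B).toReal = ∫ _ in B, β := by
          rw [setIntegral_const, smul_eq_mul, mul_comm, measureReal_def]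
      _ ≤ ∫ y in B, logKernel x y :=
          integral_mono_ae (integrableOn_const hfin) (hint x hx) h1
  have hgint : IntegrableOn (fun x => ∫ y in B, logKernel x y) B volume := by
    constructor
    · exact (measurable_logKernel.stronglyMeasurable.integral_prod_right').aestronglyMeasurable
    · refine HasFiniteIntegral.restrict_of_bounded (C := mB) hfin.lt_top ?_
      filter_upwards [ae_restrict_mem hB] with x hx
      exact hbdd x hx
  calc β * (volume B).toReal * (volume B).toReal
      = ∫ _ in B, β * (volume B).toReal := by rw [setIntegral_const, smul_eq_mul, measureReal_def]; ring
    _ ≤ ∫ x in B, ∫ y in B, logKernel x y := by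
        refine integral_mono_ae (integrableOn_const hfin) hgint ?_
        filter_upwards [ae_restrict_mem hB] with x hx
        exact hg_ge x hx

set_option maxHeartbeats 2000000 in
/-- The largest eigenvalue of the logarithmic potential operator on a domain `Ω`
satisfying the sandwich hypothesis at scale `a` is comparable to `a² |log a|`. -/
theorem eigen2_zero_scaling (c₁ c₂ : ℝ) (hc₁ : 0 < c₁) (hc₁₂ : c₁ ≤ c₂) :
    ∃ (c C a₀ : ℝ), 0 < c ∧ c ≤ C ∧ 0 < a₀ ∧ a₀ < 1 ∧
      ∀ a : ℝ, 0 < a → a < a₀ →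
        ∀ Ω : Set Pt2, Bornology.IsBounded Ω → MeasurableSet Ω →
          Sandwich c₁ c₂ a Ω →
            c * a ^ 2 * |Real.log a| ≤ eigen2 Ω 0 ∧
              eigen2 Ω 0 ≤ C * a ^ 2 * |Real.log a| := by
  have hπ : 0 < π := Real.pi_pos
  have hc₂ : 0 < c₂ := lt_of_lt_of_le hc₁ hc₁₂
  have hl2 : 0 < Real.log 2 := Real.log_pos one_lt_two
  set Vb := volume (Metric.ball (0 : Pt2) 1) with hVb
  have hVbne : Vb ≠ ⊤ := measure_ball_lt_top.ne
  set Vr := Vb.toReal with hVr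
  have hVr0 : 0 < Vr := ENNReal.toReal_pos (Metric.measure_ball_pos volume _ one_pos).ne' hVbne
  set c := c₁ ^ 2 * Vr / (4 * π) with hc
  have hc0 : 0 < c := by rw [hc]; positivity
  set D := (|Real.log (2 * c₁)| + 1) / Real.log 2 + 1 with hD
  have hD0 : 0 < D := by rw [hD]; positivity
  set CM := 1 / (2 * π) * (4 * c₂ ^ 2) * D * Vr with hCM
  have hCM0 : 0 < CM := by rw [hCM]; positivity
  set C := c + 2 * CM with hCdef
  set a₀ := min (1 / 2 : ℝ) ((2 * c₂ + 2)⁻¹ ^ 2) with ha₀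
  have ha₀0 : 0 < a₀ := by
    rw [ha₀]
    apply lt_min (by norm_num)
    positivity
  have ha₀1 : a₀ < 1 := lt_of_le_of_lt (min_le_left _ _) (by norm_num)
  refine ⟨c, C, a₀, hc0, by rw [hCdef]; linarith only [hCM0], ha₀0, ha₀1, ?_⟩
  intro a ha0 haa₀ Ω hbdd hmeas hsand
  obtain ⟨z₁, z₂, ρ₁, ρ₂, h11, h12, h21, h22, hB1, hB2⟩ := hsand
  have ha2 : a < 1 / 2 := lt_of_lt_of_le haa₀ (min_le_left _ _)
  have haC : a < (2 * c₂ + 2)⁻¹ ^ 2 := lt_of_lt_of_le haa₀ (min_le_right _ _)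
  have ha1 : a < 1 := by linarith
  have hla : 0 < -Real.log a := by
    have := Real.log_neg ha0 ha1; linarith
  have habs : |Real.log a| = -Real.log a := abs_of_neg (Real.log_neg ha0 ha1)
  have hla2 : Real.log 2 ≤ -Real.log a := by
    have h := Real.log_lt_log ha0 ha2
    rw [Real.log_div one_ne_zero two_ne_zero, Real.log_one] at h
    linarith
  have hρ₁0 : 0 < ρ₁ := lt_of_lt_of_le (by positivity) h11
  have hρ₂0 : 0 < ρ₂ := lt_of_lt_of_le (by positivity) h21
  -- the key smallness fact
  have hsmall : ∀ ρ : ℝ, ρ ≤ c₂ * a → 2 * ρ < 1 := by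
    intro ρ hρ
    have h1 : 2 * ρ ≤ 2 * c₂ * a := by linarith only [hρ]
    have h2 : 2 * c₂ * a < 2 * c₂ * ((2 * c₂ + 2)⁻¹ ^ 2) := by
      apply mul_lt_mul_of_pos_left haC (by positivity)
    have h3 : 2 * c₂ * ((2 * c₂ + 2)⁻¹ ^ 2) < 1 := by
      rw [inv_pow, mul_inv_lt_iff₀ (by positivity), one_mul]
      nlinarith only [hc₂, sq_nonneg c₂]
    linarith only [h1, h2, h3]
  have hR₂1 : 2 * ρ₂ < 1 := hsmall ρ₂ h22
  have hR₁1 : 2 * ρ₁ < 1 := hsmall ρ₁ h12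
  have hR₂0 : 0 < 2 * ρ₂ := by linarith
  have hR₁0 : 0 < 2 * ρ₁ := by linarith
  -- the Schur bound
  set M := 1 / (2 * π) * ((2 * ρ₂) ^ 2 * (-Real.log (2 * ρ₂) + 1)) * Vr with hM
  have hlogR₂ : 0 ≤ -Real.log (2 * ρ₂) := by
    have := Real.log_nonpos hR₂0.le hR₂1.le; linarith only [this]
  have hM0 : 0 ≤ M := by
    rw [hM]
    have h' : (0:ℝ) ≤ (2 * ρ₂) ^ 2 * (-Real.log (2 * ρ₂) + 1) :=
      mul_nonneg (sq_nonneg _) (by linarith only [hlogR₂])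
    have h'' : (0:ℝ) ≤ 1 / (2 * π) := by positivity
    exact mul_nonneg (mul_nonneg h'' h') hVr0.le
  have hker : ∀ x ∈ Ω, ∫⁻ y in Ω, (‖logKernel x y‖₊ : ℝ≥0∞) ∂volume ≤ ENNReal.ofReal M := by
    intro x hx
    refine kernel_lint_bound hR₂0 hR₂1 ?_
    intro w hw
    have hwb := hB2 hw
    have hxb := hB2 hx
    rw [Metric.mem_ball] at hwb hxb ⊢
    calc dist w x ≤ dist w z₂ + dist z₂ x := dist_triangle _ _ _
      _ < ρ₂ + ρ₂ := by rw [dist_comm z₂ x]; exact add_lt_add hwb hxb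
      _ = 2 * ρ₂ := by ring
  have hschur : ∀ v : Lp ℝ 2 (volume.restrict Ω), |quadForm Ω v| ≤ 2 * M * ‖v‖ ^ 2 :=
    fun v => quadForm_abs_le hmeas hM0 hker v
  -- bound 2M ≤ 2 CM a² (-log a)
  have hMle : 2 * M ≤ 2 * CM * a ^ 2 * (-Real.log a) := by
    have h1 : (2 * ρ₂) ^ 2 ≤ 4 * c₂ ^ 2 * a ^ 2 := by
      have h0 : 2 * ρ₂ ≤ 2 * c₂ * a := by linarith
      calc (2 * ρ₂) ^ 2 ≤ (2 * c₂ * a) ^ 2 := pow_le_pow_left₀ hR₂0.le h0 2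
        _ = 4 * c₂ ^ 2 * a ^ 2 := by ring
    have h2 : -Real.log (2 * ρ₂) + 1 ≤ D * (-Real.log a) := by
      have hml : Real.log (2 * c₁ * a) ≤ Real.log (2 * ρ₂) := by
        apply Real.log_le_log (by positivity)
        linarith only [h21]
      rw [Real.log_mul (by positivity) (ne_of_gt ha0)] at hml
      have habs1 : -Real.log (2 * c₁) ≤ |Real.log (2 * c₁)| := neg_le_abs _
      have hdiv : 1 ≤ (-Real.log a) / Real.log 2 := by
        rw [le_div_iff₀ hl2]; linarith only [hla2]
      have : |Real.log (2 * c₁)| + 1 ≤ (|Real.log (2 * c₁)| + 1) * ((-Real.log a) / Real.log 2) := by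
        nth_rewrite 1 [← mul_one (|Real.log (2 * c₁)| + 1)]
        exact mul_le_mul_of_nonneg_left hdiv (by positivity)
      rw [hD]
      have hexp : ((|Real.log (2 * c₁)| + 1) / Real.log 2 + 1) * (-Real.log a)
          = (|Real.log (2 * c₁)| + 1) * ((-Real.log a) / Real.log 2) + (-Real.log a) := by
        ring
      rw [hexp]
      linarith only [hml, habs1, this]
    calc 2 * M ≤ 2 * (1 / (2 * π) * ((4 * c₂ ^ 2 * a ^ 2) * (D * (-Real.log a))) * Vr) := by
          rw [hM]
          have hXY : (2 * ρ₂) ^ 2 * (-Real.log (2 * ρ₂) + 1)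
              ≤ (4 * c₂ ^ 2 * a ^ 2) * (D * (-Real.log a)) :=
            mul_le_mul h1 h2 (by linarith only [hlogR₂]) (by positivity)
          have h2π : (0:ℝ) ≤ 1 / (2 * π) := by positivity
          exact mul_le_mul_of_nonneg_left
            (mul_le_mul_of_nonneg_right (mul_le_mul_of_nonneg_left hXY h2π) hVr0.le)
            (by norm_num)
      _ = 2 * CM * a ^ 2 * (-Real.log a) := by rw [hCM]; ring
  -- the indicator test function
  set B := Metric.ball z₁ ρ₁ with hBdef
  have hBmeas : MeasurableSet B := measurableSet_ball
  have hfin : volume B ≠ ⊤ := measure_ball_lt_top.ne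
  have hres : volume.restrict Ω B = volume B := by
    rw [Measure.restrict_apply hBmeas, Set.inter_eq_self_of_subset_left hB1]
  have hfin' : volume.restrict Ω B ≠ ⊤ := by rw [hres]; exact hfin
  set u := indicatorConstLp (μ := volume.restrict Ω) 2 hBmeas hfin' (1 : ℝ) with hu
  set vB := (volume B).toReal with hvB
  have hvB0 : 0 < vB := ENNReal.toReal_pos (Metric.measure_ball_pos volume _ hρ₁0).ne' hfin
  have hnormu : ‖u‖ ^ 2 = vB := by
    rw [hu, norm_indicatorConstLp (by norm_num) (by norm_num)]
    rw [measureReal_def, hres]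
    norm_num
    rw [← Real.rpow_natCast (vB ^ _) 2, ← Real.rpow_mul ENNReal.toReal_nonneg]
    norm_num
    rfl
  have hu0 : u ≠ 0 := by
    intro h
    rw [← norm_eq_zero] at h
    rw [h] at hnormu
    simp at hnormu
    linarith only [hnormu, hvB0]
  -- lower bound on the kernel on B
  set β := 1 / (2 * π) * ((-Real.log a) / 2) with hβ
  have hβ0 : 0 < β := by
    rw [hβ]
    exact mul_pos (by positivity) (by linarith only [hla])
  have hdistB : ∀ x ∈ B, ∀ y ∈ B, dist x y < 2 * ρ₁ := by
    intro x hx y hy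
    rw [hBdef, Metric.mem_ball] at hx hy
    calc dist x y ≤ dist x z₁ + dist z₁ y := dist_triangle _ _ _
      _ < ρ₁ + ρ₁ := by rw [dist_comm z₁ y]; exact add_lt_add hx hy
      _ = 2 * ρ₁ := by ring
  have hlow : ∀ x ∈ B, ∀ y ∈ B, x ≠ y → β ≤ logKernel x y := by
    intro x hx y hy hxy
    have hd0 : 0 < dist x y := dist_pos.mpr hxy
    have hd1 : dist x y < 2 * c₂ * a := by
      have := hdistB x hx y hy; linarith only [this, h12]
    have hlogd : Real.log (dist x y) < Real.log (2 * c₂) + Real.log a := by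
      rw [← Real.log_mul (by positivity) (ne_of_gt ha0)]
      exact Real.log_lt_log hd0 hd1
    have hkey : Real.log (2 * c₂) ≤ (-Real.log a) / 2 := by
      have hA : Real.log a < Real.log ((2 * c₂ + 2)⁻¹ ^ 2) := Real.log_lt_log ha0 haC
      rw [Real.log_pow, Real.log_inv] at hA
      have hmono : Real.log (2 * c₂) ≤ Real.log (2 * c₂ + 2) :=
        Real.log_le_log (by positivity) (by linarith)
      push_cast at hA
      linarith only [hA, hmono]
    have hlogd2 : (-Real.log a) / 2 ≤ -Real.log (dist x y) := by
      linarith only [hlogd, hkey]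
    rw [logKernel]
    have : -(1 / (2 * π)) * Real.log (dist x y) = 1 / (2 * π) * (-Real.log (dist x y)) := by ring
    rw [this, hβ]
    gcongr
  -- integrability of the kernel on B
  have hBsub : ∀ x ∈ B, B ⊆ Metric.ball x (2 * ρ₁) := by
    intro x hx w hw
    rw [Metric.mem_ball]
    rw [dist_comm]
    exact hdistB x hx w hw
  set mB := 1 / (2 * π) * ((2 * ρ₁) ^ 2 * (-Real.log (2 * ρ₁) + 1)) * Vr with hmB
  have hlogR₁ : 0 ≤ -Real.log (2 * ρ₁) := by
    have := Real.log_nonpos hR₁0.le hR₁1.le; linarith only [this]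
  have hmB0 : 0 ≤ mB := by
    rw [hmB]
    have h' : (0:ℝ) ≤ (2 * ρ₁) ^ 2 * (-Real.log (2 * ρ₁) + 1) :=
      mul_nonneg (sq_nonneg _) (by linarith only [hlogR₁])
    exact mul_nonneg (mul_nonneg (by positivity) h') hVr0.le
  have hint : ∀ x ∈ B, IntegrableOn (fun y => logKernel x y) B volume := by
    intro x hx
    constructor
    · exact (measurable_logKernel.comp measurable_prodMk_left).stronglyMeasurable.aestronglyMeasurable
    · exact lt_of_le_of_lt (kernel_lint_bound hR₁0 hR₁1 (hBsub x hx)) ENNReal.ofReal_lt_top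
  have hbddB : ∀ x ∈ B, ‖∫ y in B, logKernel x y‖ ≤ mB := by
    intro x hx
    refine le_trans (norm_integral_le_lintegral_norm _) ?_
    have : (∫⁻ y in B, ENNReal.ofReal ‖logKernel x y‖ ∂volume)
        = ∫⁻ y in B, (‖logKernel x y‖₊ : ℝ≥0∞) ∂volume := by
      refine lintegral_congr fun y => ?_
      rw [ofReal_norm, enorm_eq_nnnorm]
    rw [this]
    calc (∫⁻ y in B, (‖logKernel x y‖₊ : ℝ≥0∞) ∂volume).toReal
        ≤ (ENNReal.ofReal mB).toReal := by
          refine ENNReal.toReal_mono ENNReal.ofReal_ne_top ?_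
          exact kernel_lint_bound hR₁0 hR₁1 (hBsub x hx)
      _ = mB := ENNReal.toReal_ofReal hmB0
  have hquad_ge : β * vB * vB ≤ quadForm Ω u :=
    quadForm_indicator_ge hBmeas hB1 hfin hfin' hint hlow hbddB
  -- the Rayleigh quotient of u
  set r₀ := quadForm Ω u / ‖u‖ ^ 2 with hr₀
  have hr₀_ge : β * vB ≤ r₀ := by
    rw [hr₀, hnormu, le_div_iff₀ hvB0]
    exact hquad_ge
  -- the sup set
  set S := {r : ℝ | ∃ Ξ : Submodule ℝ (Lp ℝ 2 (volume.restrict Ω)),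
    Module.finrank ℝ ↥Ξ = 0 + 1 ∧
    r = sInf {q : ℝ | ∃ v ∈ Ξ, v ≠ 0 ∧ q = quadForm Ω v / ‖v‖ ^ 2}} with hS
  have hr₀S : r₀ ∈ S := by
    refine ⟨Submodule.span ℝ {u}, by rw [finrank_span_singleton hu0], ?_⟩
    rw [rayleigh_span_eq Ω u hu0, csInf_singleton]
  have hub : ∀ r ∈ S, r ≤ 2 * M := by
    rintro r ⟨Ξ, hΞ, rfl⟩
    have hΞbot : Ξ ≠ ⊥ := by
      intro h
      rw [h] at hΞ
      simp [finrank_bot] at hΞ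
    obtain ⟨v, hvΞ, hv0⟩ := Submodule.exists_mem_ne_zero_of_ne_bot hΞbot
    have hlb : ∀ q ∈ {q : ℝ | ∃ w ∈ Ξ, w ≠ 0 ∧ q = quadForm Ω w / ‖w‖ ^ 2}, -(2 * M) ≤ q := by
      rintro q ⟨w, _, hw0, rfl⟩
      have hw2 : (0:ℝ) < ‖w‖ ^ 2 := pow_pos (norm_pos_iff.mpr hw0) 2
      rw [le_div_iff₀ hw2]
      have := hschur w
      have h1 : -(2 * M * ‖w‖ ^ 2) ≤ quadForm Ω w := neg_le_of_abs_le this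
      linarith only [h1]
    have hmem : quadForm Ω v / ‖v‖ ^ 2 ∈
        {q : ℝ | ∃ w ∈ Ξ, w ≠ 0 ∧ q = quadForm Ω w / ‖w‖ ^ 2} := ⟨v, hvΞ, hv0, rfl⟩
    refine le_trans (csInf_le ⟨-(2 * M), hlb⟩ hmem) ?_
    have hv2 : (0:ℝ) < ‖v‖ ^ 2 := pow_pos (norm_pos_iff.mpr hv0) 2
    rw [div_le_iff₀ hv2]
    exact le_trans (le_abs_self _) (hschur v)
  have hbddS : BddAbove S := ⟨2 * M, hub⟩
  constructor
  · -- lower bound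
    have h1 : c * a ^ 2 * |Real.log a| ≤ β * vB := by
      rw [habs]
      have hvBval : vB = ρ₁ ^ 2 * Vr := by
        rw [hvB, hBdef, vol_ball z₁ hρ₁0.le, ENNReal.toReal_mul,
          ENNReal.toReal_ofReal (by positivity)]
      rw [hvBval, hβ, hc]
      have hρsq : c₁ ^ 2 * a ^ 2 ≤ ρ₁ ^ 2 := by
        have := pow_le_pow_left₀ (by positivity : (0:ℝ) ≤ c₁ * a) h11 2
        calc c₁ ^ 2 * a ^ 2 = (c₁ * a) ^ 2 := by ring
          _ ≤ ρ₁ ^ 2 := this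
      calc c₁ ^ 2 * Vr / (4 * π) * a ^ 2 * (-Real.log a)
          = 1 / (2 * π) * ((-Real.log a) / 2) * ((c₁ ^ 2 * a ^ 2) * Vr) := by ring
        _ ≤ 1 / (2 * π) * ((-Real.log a) / 2) * (ρ₁ ^ 2 * Vr) := by gcongr
    refine le_trans h1 (le_trans hr₀_ge (le_csSup hbddS hr₀S))
  · -- upper bound
    refine csSup_le ⟨r₀, hr₀S⟩ ?_
    intro r hr
    refine le_trans (hub r hr) (le_trans hMle ?_)
    rw [habs, hCdef]
    have hpos : 0 ≤ a ^ 2 * (-Real.log a) := mul_nonneg (sq_nonneg a) hla.le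
    calc 2 * CM * a ^ 2 * (-Real.log a) = 2 * CM * (a ^ 2 * (-Real.log a)) := by ring
      _ ≤ (c + 2 * CM) * (a ^ 2 * (-Real.log a)) :=
          mul_le_mul_of_nonneg_right (by linarith only [hc0]) hpos
      _ = (c + 2 * CM) * a ^ 2 * (-Real.log a) := by ring

end
end

section
/- For each sufficiently small a > 0, let v_a be any L²(D_a)-normalized eigenfunction of the logarithmic potential operator N_{D_a} associated with its largest eigenvalue λ₀(D_a), chosen so that ∫_{D_a} v_a(x) dx ≥ 0. Then lim_{a → 0⁺} a⁻¹ · ∫_{D_a} v_a(x) dx = √π. -/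
open MeasureTheory Real

noncomputable section

open Set Metric
open scoped ENNReal

namespace LogPotAux

lemma volume_ball_pt2 (x : Pt2) (R : ℝ) (hR : 0 ≤ R) :
    volume (Metric.ball x R) = ENNReal.ofReal (π * R ^ 2) := by
  rw [EuclideanSpace.volume_ball, Fintype.card_fin]
  norm_num [Real.Gamma_two, Real.sq_sqrt Real.pi_nonneg]
  rw [← ENNReal.ofReal_pow hR, ← ENNReal.ofReal_mul (by positivity), mul_comm]

lemma lint_inv_norm_ball (R : ℝ) (hR : 0 < R) :
    ∫⁻ z in Metric.ball (0:Pt2) R, ENNReal.ofReal (‖z‖⁻¹) ≤ ENNReal.ofReal (5 * π * R) := by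
  set μ := volume.restrict (Metric.ball (0:Pt2) R) with hμ
  have hmeas : AEMeasurable (fun z : Pt2 => ‖z‖⁻¹) μ := (measurable_norm.inv).aemeasurable
  have hnn : 0 ≤ᵐ[μ] fun z : Pt2 => ‖z‖⁻¹ := .of_forall fun z => by positivity
  rw [show ∫⁻ z in Metric.ball (0:Pt2) R, ENNReal.ofReal (‖z‖⁻¹) = ∫⁻ z, ENNReal.ofReal (‖z‖⁻¹) ∂μ from rfl,
    lintegral_eq_lintegral_meas_le μ hnn hmeas]
  have hsplit : Ioi (0:ℝ) = Ioc (0:ℝ) R⁻¹ ∪ Ioi R⁻¹ := (Ioc_union_Ioi_eq_Ioi (by positivity)).symm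
  rw [hsplit, lintegral_union measurableSet_Ioi Ioc_disjoint_Ioi_same]
  have h1 : ∫⁻ t in Ioc (0:ℝ) R⁻¹, μ {z : Pt2 | t ≤ ‖z‖⁻¹} ≤ ENNReal.ofReal (π * R) := by
    calc ∫⁻ t in Ioc (0:ℝ) R⁻¹, μ {z : Pt2 | t ≤ ‖z‖⁻¹}
        ≤ ∫⁻ _ in Ioc (0:ℝ) R⁻¹, ENNReal.ofReal (π * R ^ 2) := by
          refine setLIntegral_mono' measurableSet_Ioc fun t ht => ?_
          calc μ {z : Pt2 | t ≤ ‖z‖⁻¹} ≤ μ univ := measure_mono (subset_univ _)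
          _ = ENNReal.ofReal (π * R ^ 2) := by
              rw [hμ, Measure.restrict_apply_univ, volume_ball_pt2 _ _ hR.le]
      _ = ENNReal.ofReal (π * R ^ 2) * volume (Ioc (0:ℝ) R⁻¹) := by
          rw [setLIntegral_const]
      _ ≤ ENNReal.ofReal (π * R) := by
          rw [Real.volume_Ioc, ← ENNReal.ofReal_mul (by positivity)]
          apply ENNReal.ofReal_le_ofReal
          rw [sub_zero]
          rw [show π * R ^ 2 * R⁻¹ = π * R * (R * R⁻¹) by ring, mul_inv_cancel₀ hR.ne']
          simp
  have h2 : ∫⁻ t in Ioi R⁻¹, μ {z : Pt2 | t ≤ ‖z‖⁻¹} ≤ ENNReal.ofReal (4 * π * R) := by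
    have hb : ∀ t ∈ Ioi R⁻¹, μ {z : Pt2 | t ≤ ‖z‖⁻¹} ≤ ENNReal.ofReal (4 * π * t ^ (-2:ℝ)) := by
      intro t ht
      have ht0 : (0:ℝ) < t := lt_trans (by positivity) ht
      have hsub : {z : Pt2 | t ≤ ‖z‖⁻¹} ⊆ Metric.ball (0:Pt2) (2 * t⁻¹) := by
        intro z hz
        simp only [mem_setOf_eq] at hz
        have hz0 : ‖z‖ ≠ 0 := by
          intro h0; rw [h0] at hz; simp at hz; linarith
        have hzpos : 0 < ‖z‖ := lt_of_le_of_ne (norm_nonneg _) (Ne.symm hz0)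
        have : ‖z‖ ≤ t⁻¹ := by
          rw [← inv_inv ‖z‖]
          exact inv_anti₀ ht0 hz
        rw [mem_ball_zero_iff]
        calc ‖z‖ ≤ t⁻¹ := this
        _ < 2 * t⁻¹ := by nlinarith [inv_pos.mpr ht0]
      calc μ {z : Pt2 | t ≤ ‖z‖⁻¹} ≤ volume {z : Pt2 | t ≤ ‖z‖⁻¹} := by
            rw [hμ]; exact Measure.restrict_le_self _
        _ ≤ volume (Metric.ball (0:Pt2) (2 * t⁻¹)) := measure_mono hsub
        _ = ENNReal.ofReal (π * (2 * t⁻¹) ^ 2) := volume_ball_pt2 _ _ (by positivity)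
        _ = ENNReal.ofReal (4 * π * t ^ (-2:ℝ)) := by
            congr 1
            rw [Real.rpow_neg ht0.le, show ((2:ℝ):ℝ) = ((2:ℕ):ℝ) by norm_num,
              Real.rpow_natCast]
            ring
    calc ∫⁻ t in Ioi R⁻¹, μ {z : Pt2 | t ≤ ‖z‖⁻¹}
        ≤ ∫⁻ t in Ioi R⁻¹, ENNReal.ofReal (4 * π * t ^ (-2:ℝ)) :=
          setLIntegral_mono' measurableSet_Ioi hb
      _ = ENNReal.ofReal (∫ t in Ioi R⁻¹, 4 * π * t ^ (-2:ℝ)) := by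
          rw [ofReal_integral_eq_lintegral_ofReal]
          · exact (integrableOn_Ioi_rpow_of_lt (by norm_num) (by positivity)).const_mul _
          · filter_upwards [self_mem_ae_restrict measurableSet_Ioi] with t ht
            have ht0 : (0:ℝ) < t := lt_trans (by positivity) ht
            positivity
      _ ≤ ENNReal.ofReal (4 * π * R) := by
          apply ENNReal.ofReal_le_ofReal
          rw [MeasureTheory.integral_const_mul, integral_Ioi_rpow_of_lt (by norm_num) (by positivity)]
          norm_num
          rw [← Real.rpow_neg_one, ← Real.rpow_mul (by positivity)]
          norm_num
  calc _ ≤ ENNReal.ofReal (π * R) + ENNReal.ofReal (4 * π * R) := add_le_add h1 h2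
    _ = ENNReal.ofReal (5 * π * R) := by
        rw [← ENNReal.ofReal_add (by positivity) (by positivity)]; ring_nf

lemma log_sq_le {s : ℝ} (h0 : 0 ≤ s) (h2 : s ≤ 2) : (Real.log s)^2 ≤ 4 / s := by
  rcases eq_or_lt_of_le h0 with h|h
  · simp [← h]
  rcases le_total s 1 with hs|hs
  · have hsq : 0 < Real.sqrt s := Real.sqrt_pos.mpr h
    have hlog : Real.log s = 2 * Real.log (Real.sqrt s) := by
      rw [Real.log_sqrt h0]; ring
    have h1 : Real.log (Real.sqrt s) = - Real.log (Real.sqrt s)⁻¹ := by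
      rw [Real.log_inv]; ring
    have h3 : Real.log (Real.sqrt s)⁻¹ ≤ (Real.sqrt s)⁻¹ := by
      calc Real.log (Real.sqrt s)⁻¹ ≤ (Real.sqrt s)⁻¹ - 1 :=
        Real.log_le_sub_one_of_pos (by positivity)
      _ ≤ _ := by linarith
    have h4 : 0 ≤ Real.log (Real.sqrt s)⁻¹ := by
      apply Real.log_nonneg
      rw [le_inv_comm₀ zero_lt_one hsq]
      simpa using Real.sqrt_le_sqrt hs
    have h5 : (Real.log s)^2 = 4 * (Real.log (Real.sqrt s)⁻¹)^2 := by
      rw [hlog, h1]; ring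
    rw [h5]
    have h6 : (Real.log (Real.sqrt s)⁻¹)^2 ≤ ((Real.sqrt s)⁻¹)^2 := by
      apply sq_le_sq' <;> nlinarith
    calc 4 * (Real.log (Real.sqrt s)⁻¹)^2 ≤ 4 * ((Real.sqrt s)⁻¹)^2 := by nlinarith
      _ = 4 / s := by rw [← Real.sqrt_inv, Real.sq_sqrt (by positivity)]; rw [div_eq_mul_inv]
  · have hl0 : 0 ≤ Real.log s := Real.log_nonneg hs
    have hl1 : Real.log s ≤ 1 := by
      calc Real.log s ≤ s - 1 := Real.log_le_sub_one_of_pos h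
      _ ≤ 1 := by linarith
    have : (Real.log s)^2 ≤ 1 := by nlinarith
    calc (Real.log s)^2 ≤ 1 := this
      _ ≤ 4 / s := by rw [le_div_iff₀ h]; linarith

lemma lint_logsq_ball_center {a : ℝ} (ha : 0 < a) :
    ∫⁻ z in Metric.ball (0:Pt2) (2*a), ENNReal.ofReal ((Real.log (‖z‖ / a))^2)
      ≤ ENNReal.ofReal (40 * π * a^2) := by
  have hpt : ∀ z ∈ Metric.ball (0:Pt2) (2*a),
      ENNReal.ofReal ((Real.log (‖z‖ / a))^2) ≤ ENNReal.ofReal (4*a) * ENNReal.ofReal (‖z‖⁻¹) := by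
    intro z hz
    rw [mem_ball_zero_iff] at hz
    rw [← ENNReal.ofReal_mul (by positivity)]
    apply ENNReal.ofReal_le_ofReal
    rcases eq_or_lt_of_le (norm_nonneg z) with h0|h0
    · simp [← h0, Real.log_zero]
    · have hs0 : 0 ≤ ‖z‖ / a := by positivity
      have hs2 : ‖z‖ / a ≤ 2 := by rw [div_le_iff₀ ha]; linarith
      calc (Real.log (‖z‖ / a))^2 ≤ 4 / (‖z‖ / a) := log_sq_le hs0 hs2
        _ = 4 * a * ‖z‖⁻¹ := by field_simp
  calc ∫⁻ z in Metric.ball (0:Pt2) (2*a), ENNReal.ofReal ((Real.log (‖z‖ / a))^2)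
      ≤ ∫⁻ z in Metric.ball (0:Pt2) (2*a), ENNReal.ofReal (4*a) * ENNReal.ofReal (‖z‖⁻¹) :=
        setLIntegral_mono' measurableSet_ball hpt
    _ = ENNReal.ofReal (4*a) * ∫⁻ z in Metric.ball (0:Pt2) (2*a), ENNReal.ofReal (‖z‖⁻¹) :=
        lintegral_const_mul' _ _ ENNReal.ofReal_ne_top
    _ ≤ ENNReal.ofReal (4*a) * ENNReal.ofReal (5 * π * (2*a)) := by
        gcongr
        exact lint_inv_norm_ball _ (by positivity)
    _ = ENNReal.ofReal (40 * π * a^2) := by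
        rw [← ENNReal.ofReal_mul (by positivity)]
        ring_nf

lemma lint_logsq_ball {a : ℝ} (ha : 0 < a) (x : Pt2) :
    ∫⁻ y in Metric.ball x (2*a), ENNReal.ofReal ((Real.log (dist x y / a))^2)
      ≤ ENNReal.ofReal (40 * π * a^2) := by
  set G : Pt2 → ℝ≥0∞ :=
    (Metric.ball (0:Pt2) (2*a)).indicator (fun z => ENNReal.ofReal ((Real.log (‖z‖ / a))^2)) with hG
  have key : ∫⁻ y in Metric.ball x (2*a), ENNReal.ofReal ((Real.log (dist x y / a))^2)
      = ∫⁻ y, G (y - x) := by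
    rw [← lintegral_indicator measurableSet_ball]
    congr 1
    ext y
    rw [hG]
    by_cases hy : y ∈ Metric.ball x (2*a)
    · rw [indicator_of_mem hy, indicator_of_mem, dist_comm x y, dist_eq_norm]
      rw [mem_ball_zero_iff]
      rw [mem_ball_iff_norm] at hy
      exact hy
    · rw [indicator_of_notMem hy, indicator_of_notMem]
      intro hmem
      rw [mem_ball_zero_iff] at hmem
      rw [mem_ball_iff_norm] at hy
      exact hy hmem
  rw [key, lintegral_sub_right_eq_self G x, hG, lintegral_indicator measurableSet_ball]
  exact lint_logsq_ball_center ha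

section CS
variable {α : Type*} [MeasurableSpace α] {μ : Measure α}

lemma lint_ofReal_sq_eq {f : α → ℝ} (hf : AEMeasurable f μ) :
    ∫⁻ x, ENNReal.ofReal ((f x)^2) ∂μ = ∫⁻ x, ENNReal.ofReal |f x| ^ (2:ℝ) ∂μ := by
  refine lintegral_congr fun x => ?_
  rw [ENNReal.ofReal_rpow_of_nonneg (abs_nonneg _) (by norm_num)]
  congr 1
  rw [show ((2:ℝ)) = ((2:ℕ):ℝ) by norm_num, Real.rpow_natCast, sq_abs]

/-- Cauchy-Schwarz via lintegral bounds, giving integrability and a bound. -/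
lemma cs_main {f g : α → ℝ} (hf : AEMeasurable f μ) (hg : AEMeasurable g μ)
    {A B : ℝ} (hA0 : 0 ≤ A) (hB0 : 0 ≤ B)
    (hA : ∫⁻ x, ENNReal.ofReal ((f x)^2) ∂μ ≤ ENNReal.ofReal A)
    (hB : ∫⁻ x, ENNReal.ofReal ((g x)^2) ∂μ ≤ ENNReal.ofReal B) :
    Integrable (fun x => f x * g x) μ ∧
      |∫ x, f x * g x ∂μ| ≤ Real.sqrt A * Real.sqrt B := by
  have key : ∫⁻ x, ENNReal.ofReal |f x * g x| ∂μ ≤ ENNReal.ofReal (Real.sqrt A * Real.sqrt B) := by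
    have h1 : ∫⁻ x, ENNReal.ofReal |f x * g x| ∂μ
        = ∫⁻ x, ENNReal.ofReal |f x| * ENNReal.ofReal |g x| ∂μ := by
      refine lintegral_congr fun x => ?_
      rw [abs_mul, ENNReal.ofReal_mul (abs_nonneg _)]
    rw [h1]
    have hfa : AEMeasurable (fun x => |f x|) μ := continuous_abs.measurable.comp_aemeasurable hf
    have hga : AEMeasurable (fun x => |g x|) μ := continuous_abs.measurable.comp_aemeasurable hg
    have hpq : Real.HolderConjugate 2 2 := .two_two
    have hH := ENNReal.lintegral_mul_le_Lp_mul_Lq μ hpq hfa.ennreal_ofReal hga.ennreal_ofReal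
    simp only [Pi.mul_apply] at hH
    calc ∫⁻ x, ENNReal.ofReal |f x| * ENNReal.ofReal |g x| ∂μ
        ≤ (∫⁻ x, ENNReal.ofReal |f x| ^ (2:ℝ) ∂μ) ^ (1/(2:ℝ)) *
          (∫⁻ x, ENNReal.ofReal |g x| ^ (2:ℝ) ∂μ) ^ (1/(2:ℝ)) := hH
      _ ≤ (ENNReal.ofReal A) ^ (1/(2:ℝ)) * (ENNReal.ofReal B) ^ (1/(2:ℝ)) := by
          gcongr
          · rw [← lint_ofReal_sq_eq hf]; exact hA
          · rw [← lint_ofReal_sq_eq hg]; exact hB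
      _ = ENNReal.ofReal (Real.sqrt A * Real.sqrt B) := by
          rw [Real.sqrt_eq_rpow, Real.sqrt_eq_rpow,
            ENNReal.ofReal_mul (by positivity),
            ← ENNReal.ofReal_rpow_of_nonneg hA0 (by norm_num),
            ← ENNReal.ofReal_rpow_of_nonneg hB0 (by norm_num)]
  have hint : Integrable (fun x => f x * g x) μ := by
    refine ⟨(hf.mul hg).aestronglyMeasurable, ?_⟩
    rw [hasFiniteIntegral_iff_norm]
    calc ∫⁻ x, ENNReal.ofReal ‖f x * g x‖ ∂μ = ∫⁻ x, ENNReal.ofReal |f x * g x| ∂μ :=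
          lintegral_congr fun x => by rw [Real.norm_eq_abs]
      _ ≤ ENNReal.ofReal (Real.sqrt A * Real.sqrt B) := key
      _ < ⊤ := ENNReal.ofReal_lt_top
  refine ⟨hint, ?_⟩
  calc |∫ x, f x * g x ∂μ| ≤ ∫ x, |f x * g x| ∂μ :=
        norm_integral_le_integral_norm (μ := μ) (fun x => f x * g x)
    _ = (∫⁻ x, ENNReal.ofReal |f x * g x| ∂μ).toReal := by
        rw [integral_eq_lintegral_of_nonneg_ae (.of_forall fun x => abs_nonneg _)
          hint.aestronglyMeasurable.norm]
    _ ≤ Real.sqrt A * Real.sqrt B :=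
        ENNReal.toReal_le_of_le_ofReal (by positivity) key

end CS

def Da (a : ℝ) : Set Pt2 := Metric.ball (0:Pt2) a
def mea (a : ℝ) : Measure Pt2 := volume.restrict (Da a)
def P2 (a : ℝ) : Measure (Pt2 × Pt2) := (mea a).prod (mea a)
def beta (a : ℝ) : ℝ := -Real.log a / (2*π)
def rker (a : ℝ) (p : Pt2 × Pt2) : ℝ := -(1/(2*π)) * Real.log (dist p.1 p.2 / a)
def Ka (a : ℝ) : ℝ := 2*(beta a)^2*(π*a^2)^2 + 20*a^4
variable {a : ℝ}

lemma mea_univ (ha : 0 ≤ a) : (mea a) univ = ENNReal.ofReal (π * a^2) := by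
  rw [mea, Measure.restrict_apply_univ, Da, volume_ball_pt2 _ _ ha]

instance (a : ℝ) : IsFiniteMeasure (mea a) := by
  constructor
  rw [mea, Measure.restrict_apply_univ]
  exact measure_ball_lt_top

lemma meas_rker : Measurable (rker a) := by
  apply Measurable.const_mul
  exact (Real.measurable_log.comp ((continuous_dist.measurable).div_const a))

lemma meas_logKernel : Measurable (fun p : Pt2 × Pt2 => logKernel p.1 p.2) := by
  apply Measurable.const_mul
  exact Real.measurable_log.comp continuous_dist.measurable

lemma diag_null : P2 a {p : Pt2 × Pt2 | p.1 = p.2} = 0 := by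
  have hm : MeasurableSet {p : Pt2 × Pt2 | p.1 = p.2} :=
    measurableSet_eq_fun measurable_fst measurable_snd
  rw [P2, Measure.prod_apply hm]
  have : ∀ x : Pt2, (mea a) (Prod.mk x ⁻¹' {p : Pt2 × Pt2 | p.1 = p.2}) = 0 := by
    intro x
    have : (Prod.mk x ⁻¹' {p : Pt2 × Pt2 | p.1 = p.2}) = {x} := by
      ext y; simp [eq_comm]
    rw [this, mea]
    exact le_antisymm ((Measure.restrict_le_self _).trans_eq (measure_singleton x)) zero_le
  calc ∫⁻ x, (mea a) (Prod.mk x ⁻¹' {p : Pt2 × Pt2 | p.1 = p.2}) ∂(mea a) = ∫⁻ _, 0 ∂(mea a) :=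
        lintegral_congr fun x => this x
    _ = 0 := lintegral_zero

lemma kernel_eq_ae (ha : 0 < a) :
    (fun p : Pt2 × Pt2 => logKernel p.1 p.2) =ᵐ[P2 a] (fun p => beta a + rker a p) := by
  have hsub : {p : Pt2 × Pt2 | ¬ logKernel p.1 p.2 = beta a + rker a p}
      ⊆ {p : Pt2 × Pt2 | p.1 = p.2} := by
    intro p hp
    simp only [mem_setOf_eq] at hp ⊢
    by_contra hne
    apply hp
    have hd : 0 < dist p.1 p.2 := dist_pos.mpr hne
    rw [logKernel, beta, rker, Real.log_div hd.ne' ha.ne']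
    field_simp
    ring
  exact measure_mono_null hsub diag_null

lemma lint_rker_sq (ha : 0 < a) :
    ∫⁻ p, ENNReal.ofReal ((rker a p)^2) ∂(P2 a) ≤ ENNReal.ofReal (10 * a^4) := by
  have hpt : ∀ p : Pt2 × Pt2, ENNReal.ofReal ((rker a p)^2)
      = ENNReal.ofReal (1/(4*π^2)) * ENNReal.ofReal ((Real.log (dist p.1 p.2 / a))^2) := by
    intro p
    rw [← ENNReal.ofReal_mul (by positivity)]
    congr 1
    rw [rker]
    rw [mul_pow]
    congr 1
    rw [neg_pow]
    norm_num
    ring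
  simp_rw [hpt]
  rw [lintegral_const_mul' _ _ ENNReal.ofReal_ne_top]
  have hinner : ∀ x ∈ Da a, ∫⁻ y, ENNReal.ofReal ((Real.log (dist x y / a))^2) ∂(mea a)
      ≤ ENNReal.ofReal (40 * π * a^2) := by
    intro x hx
    calc ∫⁻ y, ENNReal.ofReal ((Real.log (dist x y / a))^2) ∂(mea a)
        ≤ ∫⁻ y in Metric.ball x (2*a), ENNReal.ofReal ((Real.log (dist x y / a))^2) := by
          rw [mea]
          apply lintegral_mono' ?_ le_rfl
          apply Measure.restrict_mono' ?_ le_rfl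
          apply HasSubset.Subset.eventuallyLE
          intro y hy
          rw [Da, mem_ball_zero_iff] at hy
          rw [Da, mem_ball_zero_iff] at hx
          rw [mem_ball]
          calc dist y x ≤ ‖y‖ + ‖x‖ := dist_le_norm_add_norm y x
            _ < 2 * a := by linarith
      _ ≤ ENNReal.ofReal (40 * π * a^2) := lint_logsq_ball ha x
  have hmeaslog : Measurable (fun p : Pt2 × Pt2 => ENNReal.ofReal ((Real.log (dist p.1 p.2 / a))^2)) := by
    apply ENNReal.measurable_ofReal.comp
    exact (Real.measurable_log.comp ((continuous_dist.measurable).div_const a)).pow_const 2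
  have hmain : ∫⁻ p, ENNReal.ofReal ((Real.log (dist p.1 p.2 / a))^2) ∂(P2 a)
      ≤ ENNReal.ofReal (40 * π^2 * a^4) := by
    rw [P2, lintegral_prod _ hmeaslog.aemeasurable]
    calc ∫⁻ x, ∫⁻ y, ENNReal.ofReal ((Real.log (dist x y / a))^2) ∂(mea a) ∂(mea a)
        ≤ ∫⁻ _, ENNReal.ofReal (40 * π * a^2) ∂(mea a) := by
          apply lintegral_mono_ae
          filter_upwards [self_mem_ae_restrict (measurableSet_ball : MeasurableSet (Da a))] with x hx
          exact hinner x hx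
      _ = ENNReal.ofReal (40 * π * a^2) * (mea a) univ := lintegral_const _
      _ = ENNReal.ofReal (40 * π * a^2) * ENNReal.ofReal (π * a^2) := by rw [mea_univ ha.le]
      _ = ENNReal.ofReal (40 * π^2 * a^4) := by
          rw [← ENNReal.ofReal_mul (by positivity)]
          ring_nf
  calc ENNReal.ofReal (1/(4*π^2)) * ∫⁻ p, ENNReal.ofReal ((Real.log (dist p.1 p.2 / a))^2) ∂(P2 a)
      ≤ ENNReal.ofReal (1/(4*π^2)) * ENNReal.ofReal (40 * π^2 * a^4) := by gcongr
    _ = ENNReal.ofReal (10 * a^4) := by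
        rw [← ENNReal.ofReal_mul (by positivity)]
        congr 1
        have hpi : π ≠ 0 := Real.pi_ne_zero
        field_simp
        ring

lemma Ka_nonneg : 0 ≤ Ka a := by
  rw [Ka]; positivity

lemma P2_univ (ha : 0 ≤ a) : (P2 a) univ = ENNReal.ofReal ((π * a^2)^2) := by
  rw [P2, ← univ_prod_univ, Measure.prod_prod, mea_univ ha, ← ENNReal.ofReal_mul (by positivity)]
  congr 1
  ring

lemma lint_ksq (ha : 0 < a) :
    ∫⁻ p, ENNReal.ofReal ((logKernel p.1 p.2)^2) ∂(P2 a) ≤ ENNReal.ofReal (Ka a) := by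
  have hae : (fun p : Pt2 × Pt2 => ENNReal.ofReal ((logKernel p.1 p.2)^2))
      =ᵐ[P2 a] (fun p => ENNReal.ofReal ((beta a + rker a p)^2)) := by
    filter_upwards [kernel_eq_ae ha] with p hp
    rw [hp]
  rw [lintegral_congr_ae hae]
  have hpt : ∀ p : Pt2 × Pt2, ENNReal.ofReal ((beta a + rker a p)^2)
      ≤ ENNReal.ofReal (2*(beta a)^2) + ENNReal.ofReal (2*(rker a p)^2) := by
    intro p
    rw [← ENNReal.ofReal_add (by positivity) (by positivity)]
    apply ENNReal.ofReal_le_ofReal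
    nlinarith [sq_nonneg (beta a - rker a p)]
  calc ∫⁻ p, ENNReal.ofReal ((beta a + rker a p)^2) ∂(P2 a)
      ≤ ∫⁻ p, (ENNReal.ofReal (2*(beta a)^2) + ENNReal.ofReal (2*(rker a p)^2)) ∂(P2 a) :=
        lintegral_mono hpt
    _ = ENNReal.ofReal (2*(beta a)^2) * (P2 a) univ
        + ∫⁻ p, ENNReal.ofReal (2*(rker a p)^2) ∂(P2 a) := by
        rw [lintegral_add_left measurable_const, lintegral_const]
    _ ≤ ENNReal.ofReal (2*(beta a)^2) * ENNReal.ofReal ((π * a^2)^2)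
        + ENNReal.ofReal 2 * ENNReal.ofReal (10 * a^4) := by
        gcongr
        · rw [P2_univ ha.le]
        · have : ∀ p : Pt2 × Pt2, ENNReal.ofReal (2*(rker a p)^2)
              = ENNReal.ofReal 2 * ENNReal.ofReal ((rker a p)^2) := fun p => by
            rw [← ENNReal.ofReal_mul (by norm_num)]
          simp_rw [this]
          rw [lintegral_const_mul' _ _ ENNReal.ofReal_ne_top]
          gcongr
          exact lint_rker_sq ha
    _ ≤ ENNReal.ofReal (Ka a) := by
        rw [← ENNReal.ofReal_mul (by positivity), ← ENNReal.ofReal_mul (by norm_num),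
          ← ENNReal.ofReal_add (by positivity) (by positivity)]
        apply ENNReal.ofReal_le_ofReal
        rw [Ka]
        ring_nf
        exact le_rfl

lemma key_quad (ha : 0 < a) {w : Pt2 → ℝ} (hw : Measurable w) {W : ℝ} (hW0 : 0 ≤ W)
    (hw2 : ∫⁻ x, ENNReal.ofReal ((w x)^2) ∂(mea a) ≤ ENNReal.ofReal W) :
    (∃ E : ℝ, |E| ≤ Real.sqrt (10*a^4) * W ∧
      ∫ x, NOp (Da a) w x * w x ∂(mea a) = beta a * (∫ x, w x ∂(mea a))^2 + E) ∧
    |∫ x, NOp (Da a) w x * w x ∂(mea a)| ≤ Real.sqrt (Ka a) * W := by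
  have hWW : AEMeasurable (fun p : Pt2 × Pt2 => w p.1 * w p.2) (P2 a) :=
    ((hw.comp measurable_fst).mul (hw.comp measurable_snd)).aemeasurable
  have hWsq : ∫⁻ p, ENNReal.ofReal ((w p.1 * w p.2)^2) ∂(P2 a) ≤ ENNReal.ofReal (W^2) := by
    have hpt : ∀ p : Pt2 × Pt2, ENNReal.ofReal ((w p.1 * w p.2)^2)
        = ENNReal.ofReal ((w p.1)^2) * ENNReal.ofReal ((w p.2)^2) := fun p => by
      rw [mul_pow, ENNReal.ofReal_mul (by positivity)]
    simp_rw [hpt]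
    have hm : AEMeasurable (fun x : Pt2 => ENNReal.ofReal ((w x)^2)) (mea a) :=
      (ENNReal.measurable_ofReal.comp (hw.pow_const 2)).aemeasurable
    rw [P2, lintegral_prod_mul hm hm]
    rw [sq W, ENNReal.ofReal_mul hW0]
    exact mul_le_mul' hw2 hw2
  have csK := cs_main meas_logKernel.aemeasurable hWW Ka_nonneg (by positivity)
    (lint_ksq ha) hWsq
  have csR := cs_main meas_rker.aemeasurable hWW (by positivity) (by positivity)
    (lint_rker_sq ha) hWsq
  have csOne := cs_main (aemeasurable_const : AEMeasurable (fun _ : Pt2 × Pt2 => (1:ℝ)) (P2 a))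
    hWW (A := (π*a^2)^2) (by positivity) (by positivity)
    (by
      rw [lintegral_const]
      simp only [one_pow, ENNReal.ofReal_one, one_mul]
      rw [P2_univ ha.le]) hWsq
  have hIntWW : Integrable (fun p : Pt2 × Pt2 => w p.1 * w p.2) (P2 a) := by
    have := csOne.1
    apply this.congr
    filter_upwards with p
    ring
  -- Fubini
  have hFub : ∫ p, logKernel p.1 p.2 * (w p.1 * w p.2) ∂(P2 a)
      = ∫ x, NOp (Da a) w x * w x ∂(mea a) := by
    rw [P2, integral_prod _ csK.1]
    apply integral_congr_ae
    filter_upwards with x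
    rw [show (fun y => logKernel x y * (w x * w y)) = fun y => (logKernel x y * w y) * w x from
      funext fun y => by ring, integral_mul_const]
    rfl
  -- decomposition
  have hsplit : (fun p : Pt2 × Pt2 => logKernel p.1 p.2 * (w p.1 * w p.2))
      =ᵐ[P2 a] (fun p => beta a * (w p.1 * w p.2) + rker a p * (w p.1 * w p.2)) := by
    filter_upwards [kernel_eq_ae ha] with p hp
    rw [hp]; ring
  have hdecomp : ∫ p, logKernel p.1 p.2 * (w p.1 * w p.2) ∂(P2 a)
      = beta a * (∫ x, w x ∂(mea a))^2 + ∫ p, rker a p * (w p.1 * w p.2) ∂(P2 a) := by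
    rw [integral_congr_ae hsplit, integral_add (hIntWW.const_mul _) csR.1,
      integral_const_mul]
    congr 2
    rw [P2, integral_prod_mul, sq]
  constructor
  · refine ⟨∫ p, rker a p * (w p.1 * w p.2) ∂(P2 a), ?_, by rw [← hFub, hdecomp]⟩
    calc |∫ p, rker a p * (w p.1 * w p.2) ∂(P2 a)| ≤ Real.sqrt (10*a^4) * Real.sqrt (W^2) :=
        csR.2
      _ = Real.sqrt (10*a^4) * W := by rw [Real.sqrt_sq hW0]
  · rw [← hFub]
    calc |∫ p, logKernel p.1 p.2 * (w p.1 * w p.2) ∂(P2 a)|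
        ≤ Real.sqrt (Ka a) * Real.sqrt (W^2) := csK.2
      _ = Real.sqrt (Ka a) * W := by rw [Real.sqrt_sq hW0]

lemma norm_sq_L2 (u : Lp ℝ 2 (mea a)) : ‖u‖^2 = ∫ x, (u x)^2 ∂(mea a) := by
  rw [← real_inner_self_eq_norm_sq, L2.inner_def]
  apply integral_congr_ae
  filter_upwards with x
  simp [RCLike.inner_apply, sq]

lemma nop_congr {f g : Pt2 → ℝ} (h : f =ᵐ[mea a] g) (x : Pt2) :
    NOp (Da a) f x = NOp (Da a) g x := by
  apply integral_congr_ae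
  filter_upwards [h] with y hy
  rw [hy]

lemma quadInt_congr {f g : Pt2 → ℝ} (h : f =ᵐ[mea a] g) :
    ∫ x, NOp (Da a) f x * f x ∂(mea a) = ∫ x, NOp (Da a) g x * g x ∂(mea a) := by
  apply integral_congr_ae
  filter_upwards [h] with x hx
  rw [hx, nop_congr h]

lemma lint_sq_coe (u : Lp ℝ 2 (mea a)) :
    ∫⁻ x, ENNReal.ofReal ((u x)^2) ∂(mea a) = ENNReal.ofReal (‖u‖^2) := by
  rw [norm_sq_L2, ofReal_integral_eq_lintegral_ofReal (Lp.memLp u).integrable_sq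
    (.of_forall fun x => sq_nonneg _)]

lemma quadForm_abs_le (ha : 0 < a) (u : Lp ℝ 2 (volume.restrict (Da a))) :
    |quadForm (Da a) u| ≤ Real.sqrt (Ka a) * ‖u‖^2 := by
  have hsm := Lp.aestronglyMeasurable u
  set w := hsm.mk with hwdef
  have hw : Measurable w := hsm.stronglyMeasurable_mk.measurable
  have heq : ⇑u =ᵐ[mea a] w := hsm.ae_eq_mk
  have hquad : quadForm (Da a) u = ∫ x, NOp (Da a) w x * w x ∂(mea a) := quadInt_congr heq
  have hw2 : ∫⁻ x, ENNReal.ofReal ((w x)^2) ∂(mea a) ≤ ENNReal.ofReal (‖u‖^2) := by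
    rw [show ∫⁻ x, ENNReal.ofReal ((w x)^2) ∂(mea a)
        = ∫⁻ x, ENNReal.ofReal ((u x)^2) ∂(mea a) from
      lintegral_congr_ae (heq.mono fun x hx => by
        show ENNReal.ofReal ((w x)^2) = ENNReal.ofReal ((u x)^2)
        rw [hx])]
    exact (lint_sq_coe u).le
  rw [hquad]
  exact (key_quad ha hw (by positivity) hw2).2

lemma quadForm_smul (c : ℝ) (u : Lp ℝ 2 (volume.restrict (Da a))) :
    quadForm (Da a) (c • u) = c^2 * quadForm (Da a) u := by
  have hcoe : ⇑(c • u) =ᵐ[mea a] fun x => c * u x := by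
    filter_upwards [Lp.coeFn_smul c u] with x hx
    rw [hx]; rfl
  have hnop : ∀ x, NOp (Da a) (⇑(c • u)) x = c * NOp (Da a) (⇑u) x := by
    intro x
    rw [nop_congr hcoe x]
    calc NOp (Da a) (fun z => c * u z) x
        = ∫ y in Da a, c * (logKernel x y * u y) := by
          unfold NOp
          apply integral_congr_ae
          filter_upwards with y
          ring
      _ = c * NOp (Da a) (⇑u) x := integral_const_mul c _
  have : quadForm (Da a) (c • u) = ∫ x, (c * NOp (Da a) (⇑u) x) * (c * u x) ∂(mea a) := by
    apply integral_congr_ae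
    filter_upwards [hcoe] with x hx
    rw [hx, hnop]
  rw [this, show (fun x => (c * NOp (Da a) (⇑u) x) * (c * u x))
    = fun x => c^2 * (NOp (Da a) (⇑u) x * u x) from funext fun x => by ring,
    integral_const_mul]
  rfl

lemma eigen2_ge (ha : 0 < a) (φ : Lp ℝ 2 (volume.restrict (Da a))) (hφ : φ ≠ 0) :
    quadForm (Da a) φ / ‖φ‖^2 ≤ eigen2 (Da a) 0 := by
  set S := {r : ℝ | ∃ Ξ : Submodule ℝ (Lp ℝ 2 (volume.restrict (Da a))),
    Module.finrank ℝ ↥Ξ = 0 + 1 ∧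
    r = sInf {q : ℝ | ∃ u ∈ Ξ, u ≠ 0 ∧ q = quadForm (Da a) u / ‖u‖ ^ 2}} with hS
  have hray : ∀ u : Lp ℝ 2 (volume.restrict (Da a)), u ≠ 0 →
      |quadForm (Da a) u / ‖u‖^2| ≤ Real.sqrt (Ka a) := by
    intro u hu
    have hn : 0 < ‖u‖^2 := by
      have := norm_pos_iff.mpr hu  -- ‖u‖ > 0
      positivity
    rw [abs_div, abs_of_pos hn, div_le_iff₀ hn]
    exact quadForm_abs_le ha u
  have hBdd : BddAbove S := by
    refine ⟨Real.sqrt (Ka a), fun s hs => ?_⟩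
    obtain ⟨Ξ, hdim, rfl⟩ := hs
    obtain ⟨u₀, hu₀Ξ, hu₀⟩ := Submodule.exists_mem_ne_zero_of_ne_bot (p := Ξ) (by
      intro hbot
      rw [hbot] at hdim
      simp at hdim)
    have hmem : quadForm (Da a) u₀ / ‖u₀‖^2
        ∈ {q : ℝ | ∃ u ∈ Ξ, u ≠ 0 ∧ q = quadForm (Da a) u / ‖u‖ ^ 2} := ⟨u₀, hu₀Ξ, hu₀, rfl⟩
    have hbdd : BddBelow {q : ℝ | ∃ u ∈ Ξ, u ≠ 0 ∧ q = quadForm (Da a) u / ‖u‖ ^ 2} := by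
      refine ⟨-Real.sqrt (Ka a), fun q hq => ?_⟩
      obtain ⟨u, _, hu, rfl⟩ := hq
      exact neg_le_of_abs_le (hray u hu)
    calc sInf _ ≤ quadForm (Da a) u₀ / ‖u₀‖^2 := csInf_le hbdd hmem
      _ ≤ Real.sqrt (Ka a) := le_of_abs_le (hray u₀ hu₀)
  have hmemS : quadForm (Da a) φ / ‖φ‖^2 ∈ S := by
    refine ⟨Submodule.span ℝ {φ}, by rw [finrank_span_singleton hφ], ?_⟩
    have hTeq : {q : ℝ | ∃ u ∈ Submodule.span ℝ {φ}, u ≠ 0 ∧ q = quadForm (Da a) u / ‖u‖ ^ 2}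
        = {quadForm (Da a) φ / ‖φ‖^2} := by
      ext q
      simp only [mem_setOf_eq, mem_singleton_iff]
      constructor
      · rintro ⟨u, huspan, hu0, rfl⟩
        obtain ⟨c, rfl⟩ := Submodule.mem_span_singleton.mp huspan
        have hc : c ≠ 0 := by
          rintro rfl
          simp at hu0
        rw [quadForm_smul, norm_smul]
        rw [Real.norm_eq_abs, mul_pow, sq_abs]
        rw [mul_div_mul_left _ _ (by positivity : c^2 ≠ 0)]
      · rintro rfl
        exact ⟨φ, Submodule.mem_span_singleton_self φ, hφ, rfl⟩
    rw [hTeq, csInf_singleton]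
  exact le_csSup hBdd hmemS

lemma sqrt_ten (ha : 0 ≤ a) : Real.sqrt (10*a^4) = Real.sqrt 10 * a^2 := by
  rw [show 10*a^4 = 10*(a^2)^2 by ring, Real.sqrt_mul (by norm_num), Real.sqrt_sq (by positivity)]

set_option maxHeartbeats 2000000 in
lemma main_bound (ha : 0 < a) (ha2 : a < 1/2) {f : Pt2 → ℝ}
    (hf1 : MemLp f 2 (mea a)) (hf2 : ∫ x, (f x)^2 ∂(mea a) = 1)
    (hf3 : ∀ᵐ x ∂(mea a), NOp (Da a) f x = eigen2 (Da a) 0 * f x)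
    (hf4 : 0 ≤ ∫ x, f x ∂(mea a)) :
    Real.sqrt (π - (4*π*Real.sqrt 10)/(-Real.log a)) ≤ a⁻¹ * ∫ x, f x ∂(mea a) ∧
      a⁻¹ * ∫ x, f x ∂(mea a) ≤ Real.sqrt π := by
  have hπa : (0:ℝ) < π * a^2 := by positivity
  -- measurable representative
  have hsm := hf1.aestronglyMeasurable
  set w := hsm.mk with hwdef
  have hw : Measurable w := hsm.stronglyMeasurable_mk.measurable
  have heq : f =ᵐ[mea a] w := hsm.ae_eq_mk
  have hIntf2 : Integrable (fun x => (f x)^2) (mea a) := hf1.integrable_sq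
  have hsq : (fun x => (f x)^2) =ᵐ[mea a] (fun x => (w x)^2) :=
    heq.mono fun x hx => by show (f x)^2 = (w x)^2; rw [hx]
  have hIntw2 : Integrable (fun x => (w x)^2) (mea a) := hIntf2.congr hsq
  have hw2int : ∫ x, (w x)^2 ∂(mea a) = 1 := by
    rw [← hf2]
    exact integral_congr_ae hsq.symm
  have hm_eq : ∫ x, w x ∂(mea a) = ∫ x, f x ∂(mea a) :=
    (integral_congr_ae heq).symm
  set m := ∫ x, f x ∂(mea a) with hmdef
  -- lintegral bound for w
  have hw2 : ∫⁻ x, ENNReal.ofReal ((w x)^2) ∂(mea a) ≤ ENNReal.ofReal 1 := by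
    rw [← ofReal_integral_eq_lintegral_ofReal hIntw2 (.of_forall fun x => sq_nonneg _), hw2int]
  -- eigen2 (Da a) 0 = quad integral of w
  have hlam : ∫ x, NOp (Da a) w x * w x ∂(mea a) = eigen2 (Da a) 0 := by
    have hae : ∀ᵐ x ∂(mea a), NOp (Da a) w x * w x = eigen2 (Da a) 0 * (w x)^2 := by
      filter_upwards [hf3, heq] with x hx hfx
      rw [nop_congr heq.symm x, hx, hfx]
      ring
    rw [integral_congr_ae hae, integral_const_mul, hw2int, mul_one]
  -- decomposition for w
  obtain ⟨⟨E₂, hE₂, hdec⟩, -⟩ := key_quad ha hw zero_le_one hw2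
  rw [hlam, hm_eq] at hdec
  clear_value w
  -- |m| ≤ sqrt(pi a^2)
  have hmbound : m^2 ≤ π * a^2 := by
    have hone : ∫⁻ x, ENNReal.ofReal ((1:ℝ)^2) ∂(mea a) ≤ ENNReal.ofReal (π*a^2) := by
      simp only [one_pow, ENNReal.ofReal_one]
      rw [lintegral_one, mea_univ ha.le]
    have hcs := (cs_main hw.aemeasurable (aemeasurable_const : AEMeasurable (fun _ : Pt2 => (1:ℝ)) (mea a))
      zero_le_one hπa.le hw2 hone).2
    simp only [mul_one, Real.sqrt_one, one_mul] at hcs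
    rw [hm_eq] at hcs
    calc m^2 = |m|^2 := (sq_abs m).symm
      _ ≤ (Real.sqrt (π*a^2))^2 := by
          apply pow_le_pow_left₀ (abs_nonneg m) hcs
      _ = π * a^2 := Real.sq_sqrt hπa.le
  -- constant test function
  have hconst : MemLp (fun _ : Pt2 => (1:ℝ)) 2 (mea a) := memLp_const 1
  set φ := hconst.toLp (fun _ : Pt2 => (1:ℝ)) with hφdef
  have hφcoe : ⇑φ =ᵐ[mea a] fun _ => (1:ℝ) := hconst.coeFn_toLp
  have hφnorm : ‖φ‖^2 = π * a^2 := by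
    rw [norm_sq_L2]
    rw [integral_congr_ae (hφcoe.mono fun x hx => by show (φ x)^2 = 1^2; rw [hx])]
    simp [integral_const, measureReal_def, mea_univ ha.le, ENNReal.toReal_ofReal hπa.le]
  have hφ0 : φ ≠ 0 := by
    intro h0
    rw [h0] at hφnorm
    simp at hφnorm
    exact ha.ne' hφnorm
  have hone2 : ∫⁻ x, ENNReal.ofReal (((fun _ : Pt2 => (1:ℝ)) x)^2) ∂(mea a)
      ≤ ENNReal.ofReal (π*a^2) := by
    simp only [one_pow, ENNReal.ofReal_one]
    rw [lintegral_one, mea_univ ha.le]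
  obtain ⟨⟨E₁, hE₁, hdec1⟩, -⟩ := key_quad ha (measurable_const : Measurable (fun _ : Pt2 => (1:ℝ)))
    hπa.le hone2
  have hint1 : ∫ x, (fun _ : Pt2 => (1:ℝ)) x ∂(mea a) = π * a^2 := by
    simp [integral_const, measureReal_def, mea_univ ha.le, ENNReal.toReal_ofReal hπa.le]
  rw [hint1] at hdec1
  have hquadφ : quadForm (Da a) φ = beta a * (π*a^2)^2 + E₁ := by
    rw [← hdec1]
    exact quadInt_congr hφcoe
  -- eigenvalue lower bound
  have hlower : beta a * (π*a^2) - Real.sqrt 10 * a^2 ≤ eigen2 (Da a) 0 := by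
    have := eigen2_ge ha φ hφ0
    rw [hquadφ] at this
    replace this : (beta a * (π*a^2)^2 + E₁) / (π*a^2) ≤ eigen2 (Da a) 0 := by
      convert this using 2
      exact hφnorm.symm
    calc beta a * (π*a^2) - Real.sqrt 10 * a^2
        ≤ (beta a * (π*a^2)^2 + E₁) / (π*a^2) := by
          rw [le_div_iff₀ hπa]
          have : -(Real.sqrt (10*a^4) * (π*a^2)) ≤ E₁ := neg_le_of_abs_le hE₁
          rw [sqrt_ten ha.le] at this
          nlinarith
      _ ≤ eigen2 (Da a) 0 := this
  -- eigenvalue upper bound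
  have hupper : eigen2 (Da a) 0 ≤ beta a * m^2 + Real.sqrt 10 * a^2 := by
    rw [hdec]
    have : E₂ ≤ Real.sqrt (10*a^4) * 1 := le_of_abs_le hE₂
    rw [sqrt_ten ha.le, mul_one] at this
    linarith
  -- positivity of beta
  have hloga : 0 < -Real.log a := by
    have : Real.log a < 0 := Real.log_neg ha (by linarith)
    linarith
  have hβ : 0 < beta a := by
    rw [beta]
    positivity
  -- main gap inequality
  have hgap : π * a^2 - m^2 ≤ (4 * π * Real.sqrt 10 * a^2) / (-Real.log a) := by
    have hlog0 : Real.log a ≠ 0 := by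
      intro h
      rw [h] at hloga
      simp at hloga
    have h1 : beta a * (π * a^2 - m^2) ≤ 2 * Real.sqrt 10 * a^2 := by nlinarith
    have h2 : π * a^2 - m^2 ≤ (2 * Real.sqrt 10 * a^2) / beta a := by
      rw [le_div_iff₀ hβ]
      nlinarith
    calc π * a^2 - m^2 ≤ (2 * Real.sqrt 10 * a^2) / beta a := h2
      _ = (4 * π * Real.sqrt 10 * a^2) / (-Real.log a) := by
          rw [beta]
          field_simp
          ring
  clear_value m
  have ha2pos : (0:ℝ) < a^2 := by positivity
  have hγ0 : 0 ≤ a⁻¹ * m := mul_nonneg (by positivity) hf4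
  have hγsq : (a⁻¹ * m)^2 = m^2 / a^2 := by
    field_simp
  have hγπ : (a⁻¹ * m)^2 ≤ π := by
    rw [hγsq, div_le_iff₀ ha2pos]
    nlinarith
  have hγlow : π - (4*π*Real.sqrt 10)/(-Real.log a) ≤ (a⁻¹ * m)^2 := by
    rw [hγsq, le_div_iff₀ ha2pos]
    have hd : (4 * π * Real.sqrt 10 * a^2) / (-Real.log a)
        = ((4*π*Real.sqrt 10)/(-Real.log a)) * a^2 := by ring
    rw [hd] at hgap
    nlinarith [hgap]
  constructor
  · calc Real.sqrt (π - (4*π*Real.sqrt 10)/(-Real.log a)) ≤ Real.sqrt ((a⁻¹ * m)^2) :=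
        Real.sqrt_le_sqrt hγlow
      _ = a⁻¹ * m := Real.sqrt_sq hγ0
  · calc a⁻¹ * m = Real.sqrt ((a⁻¹ * m)^2) := (Real.sqrt_sq hγ0).symm
      _ ≤ Real.sqrt π := Real.sqrt_le_sqrt hγπ

end LogPotAux

/-- If, for each sufficiently small `a > 0`, `v a` is an `L²(D_a)`-normalized eigenfunction of
the logarithmic potential operator on the disc `D_a` of radius `a` centered at the origin,
associated with the largest eigenvalue and with nonnegative integral, then
`a⁻¹ ∫_{D_a} v_a → √π` as `a → 0⁺`. -/
theorem integral_first_eigenfunction_disc_limit :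
    ∃ a₀ : ℝ, 0 < a₀ ∧ a₀ < 1 ∧
      ∀ v : ℝ → Pt2 → ℝ,
        (∀ a : ℝ, 0 < a → a < a₀ →
          MemLp (v a) 2 (volume.restrict (Metric.ball (0 : Pt2) a)) ∧
          (∫ x in Metric.ball (0 : Pt2) a, v a x ^ 2) = 1 ∧
          (∀ᵐ x ∂(volume.restrict (Metric.ball (0 : Pt2) a)),
            NOp (Metric.ball (0 : Pt2) a) (v a) x =
              eigen2 (Metric.ball (0 : Pt2) a) 0 * v a x) ∧
          0 ≤ ∫ x in Metric.ball (0 : Pt2) a, v a x) →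
        Filter.Tendsto (fun a : ℝ => a⁻¹ * ∫ x in Metric.ball (0 : Pt2) a, v a x)
          (nhdsWithin 0 (Set.Ioi 0)) (nhds (Real.sqrt π)) := by

  refine ⟨1/2, by norm_num, by norm_num, fun v hv => ?_⟩
  have hbounds : ∀ᶠ a in nhdsWithin 0 (Set.Ioi 0),
      Real.sqrt (π - (4*π*Real.sqrt 10)/(-Real.log a))
        ≤ a⁻¹ * ∫ x in Metric.ball (0 : Pt2) a, v a x ∧
      a⁻¹ * (∫ x in Metric.ball (0 : Pt2) a, v a x) ≤ Real.sqrt π := by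
    filter_upwards [Ioo_mem_nhdsGT_of_mem (show (0:ℝ) ∈ Ico (0:ℝ) (1/2) by constructor <;> norm_num)]
      with a ha
    obtain ⟨hf1, hf2, hf3, hf4⟩ := hv a ha.1 ha.2
    exact LogPotAux.main_bound ha.1 ha.2 hf1 hf2 hf3 hf4
  have hlogtop : Filter.Tendsto (fun a : ℝ => -Real.log a) (nhdsWithin 0 (Set.Ioi 0)) Filter.atTop := by
    have := Real.tendsto_log_nhdsGT_zero
    exact Filter.tendsto_neg_atBot_iff.mp (by simpa using this)
  have hδ : Filter.Tendsto (fun a : ℝ => (4*π*Real.sqrt 10)/(-Real.log a))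
      (nhdsWithin 0 (Set.Ioi 0)) (nhds 0) :=
    Filter.Tendsto.div_atTop tendsto_const_nhds hlogtop
  have hlowtend : Filter.Tendsto (fun a : ℝ => Real.sqrt (π - (4*π*Real.sqrt 10)/(-Real.log a)))
      (nhdsWithin 0 (Set.Ioi 0)) (nhds (Real.sqrt π)) := by
    have h1 : Filter.Tendsto (fun a : ℝ => π - (4*π*Real.sqrt 10)/(-Real.log a))
        (nhdsWithin 0 (Set.Ioi 0)) (nhds π) := by
      simpa using (tendsto_const_nhds (x := π) (f := nhdsWithin (0:ℝ) (Set.Ioi 0))).sub hδ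
    exact ((Real.continuous_sqrt.tendsto π).comp h1 : _)
  exact tendsto_of_tendsto_of_tendsto_of_le_of_le' hlowtend tendsto_const_nhds
    (hbounds.mono fun a h => h.1) (hbounds.mono fun a h => h.2)

end
end
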